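/- arXiv:1310.6289 — 7 statements merged into one kernel-verified Lean document; each statement's English description precedes it below -/
import Mathlib

section
/- Suppose a group G acts on a simplicial tree T by graph automorphisms and G fixes an end of T. Then the set N of all elliptic elements of G is a normal subgroup of G, and there exists a group homomorphism φ : G → ℤ with kernel exactly N; in particular the quotient G/N is either trivial or infinite cyclic. -/
/-- A geodesic ray in a simplicial tree. -/
def GeodesicRay {V : Type*} (T : SimpleGraph V) (r : ℕ → V) : Prop :=
  ∀ m n : ℕ, m ≤ n → T.dist (r m) (r n) = n - m

/-- `G` fixes an end of the tree `T`. -/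
def FixesEnd (G : Type*) {V : Type*} [Group G] [MulAction G V] (T : SimpleGraph V) : Prop :=
  ∃ r : ℕ → V, GeodesicRay T r ∧
    ∀ g : G, ∃ m n : ℕ, ∀ i : ℕ, g • r (m + i) = r (n + i)

/-- if `G` fixes an end of `T`, the elliptic elements form a normal subgroup
`N` which is the kernel of a homomorphism `G → ℤ`; in particular `G/N` is trivial or
infinite cyclic. -/
theorem stmt_4 {V G : Type*} [Group G] [MulAction G V] (T : SimpleGraph V)
    (hT : T.IsTree)
    (haut : ∀ (g : G) (a b : V), T.Adj (g • a) (g • b) ↔ T.Adj a b)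
    (hend : FixesEnd G T) :
    ∃ N : Subgroup G, N.Normal ∧
      (N : Set G) =
        {g : G | (∃ w : V, g • w = w) ∨ ∃ a b : V, T.Adj a b ∧ g • a = b ∧ g • b = a} ∧
      ∃ φ : G →* Multiplicative ℤ, φ.ker = N := by
  obtain ⟨r, hr, hfix⟩ := hend
  have hconn : T.Connected := hT.isConnected
  -- the action preserves distances
  have hdle : ∀ (g : G) (a b : V), T.dist (g • a) (g • b) ≤ T.dist a b := by
    intro g a b
    obtain ⟨p, hp⟩ := hconn.exists_walk_length_eq_dist a b
    let hom : T →g T := ⟨fun v => g • v, fun {x y} h => (haut g x y).mpr h⟩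
    calc T.dist (g • a) (g • b) ≤ (p.map hom).length := SimpleGraph.dist_le (p.map hom)
      _ = p.length := SimpleGraph.Walk.length_map _ _
      _ = T.dist a b := hp
  have hdist : ∀ (g : G) (a b : V), T.dist (g • a) (g • b) = T.dist a b := by
    intro g a b
    refine le_antisymm (hdle g a b) ?_
    have := hdle g⁻¹ (g • a) (g • b)
    simpa [inv_smul_smul] using this
  -- injectivity of the ray
  have rinj : Function.Injective r := by
    intro a b hab
    rcases le_total a b with h | h
    · have := hr a b h; rw [hab] at this
      simp [SimpleGraph.dist_self] at this; omega
    · have := hr b a h; rw [hab] at this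
      simp [SimpleGraph.dist_self] at this; omega
  -- translation length is well-defined
  have wd : ∀ (g : G) (m n m' n' : ℕ), (∀ i, g • r (m + i) = r (n + i)) →
      (∀ i, g • r (m' + i) = r (n' + i)) → (n : ℤ) - m = (n' : ℤ) - m' := by
    have aux : ∀ (g : G) (m n m' n' : ℕ), m ≤ m' →
        (∀ i, g • r (m + i) = r (n + i)) →
        (∀ i, g • r (m' + i) = r (n' + i)) → (n : ℤ) - m = (n' : ℤ) - m' := by
      intro g m n m' n' hmm h1 h2
      have e1 : g • r (m + (m' - m)) = r (n + (m' - m)) := h1 (m' - m)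
      have e2 : g • r (m' + 0) = r (n' + 0) := h2 0
      have : m + (m' - m) = m' + 0 := by omega
      rw [this, e2] at e1
      have := rinj e1
      omega
    intro g m n m' n' h1 h2
    rcases le_total m m' with h | h
    · exact aux g m n m' n' h h1 h2
    · exact (aux g m' n' m n h h2 h1).symm
  -- the translation length function
  set t : G → ℤ := fun g =>
    ((hfix g).choose_spec.choose : ℤ) - (hfix g).choose with ht
  have tspec : ∀ (g : G) (m n : ℕ), (∀ i, g • r (m + i) = r (n + i)) →
      t g = (n : ℤ) - m := by
    intro g m n h
    exact wd g (hfix g).choose (hfix g).choose_spec.choose m n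
      (hfix g).choose_spec.choose_spec h
  -- t is additive
  have hhom : ∀ g h : G, t (g * h) = t g + t h := by
    intro g h
    obtain ⟨m₁, n₁, h1⟩ := hfix g
    obtain ⟨m₂, n₂, h2⟩ := hfix h
    have key : ∀ i, (g * h) • r ((m₁ + m₂) + i) = r ((n₁ + n₂) + i) := by
      intro i
      have e1 : (m₁ + m₂) + i = m₂ + (m₁ + i) := by omega
      have e2 : n₂ + (m₁ + i) = m₁ + (n₂ + i) := by omega
      calc (g * h) • r ((m₁ + m₂) + i) = g • (h • r (m₂ + (m₁ + i))) := by
            rw [e1, mul_smul]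
        _ = g • r (m₁ + (n₂ + i)) := by rw [h2 (m₁ + i), e2]
        _ = r ((n₁ + n₂) + i) := by
            rw [h1 (n₂ + i)]; congr 1; omega
    rw [tspec (g * h) _ _ key, tspec g _ _ h1, tspec h _ _ h2]
    push_cast; ring
  -- a contradiction helper: distances to a fixed point can't be periodic along the ray
  have helper : ∀ (w : V) (m n : ℕ), m < n →
      (∀ i, T.dist w (r (m + i)) = T.dist w (r (n + i))) → False := by
    intro w m n hmn hper
    set c := T.dist w (r m) with hc
    have step : ∀ j, T.dist w (r (m + j)) = T.dist w (r (m + j + (n - m))) := by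
      intro j
      have := hper j
      have e : n + j = m + j + (n - m) := by omega
      rw [e] at this; exact this
    have iter : ∀ k, T.dist w (r (m + k * (n - m))) = c := by
      intro k
      induction k with
      | zero => simp [hc]
      | succ k ih =>
        have := (step (k * (n - m))).symm
        have e : m + k * (n - m) + (n - m) = m + (k + 1) * (n - m) := by ring
        rw [e] at this
        rw [this, ih]
    set k := 2 * c + 1 with hk
    set K := m + k * (n - m) with hK
    have h1 : T.dist (r m) (r K) = k * (n - m) := by
      have := hr m K (by omega)
      rw [this]; omega
    have h2 : T.dist (r m) (r K) ≤ T.dist (r m) w + T.dist w (r K) :=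
      hconn.dist_triangle
    rw [h1, iter k, SimpleGraph.dist_comm, ← hc] at h2
    have hpos : 1 ≤ n - m := by omega
    have : k ≤ k * (n - m) := Nat.le_mul_of_pos_right k (by omega)
    omega
  -- elements fixing a vertex have translation length 0
  have hfixzero : ∀ (g : G) (w : V), g • w = w → t g = 0 := by
    intro g w hw
    obtain ⟨m, n, h⟩ := hfix g
    have hper : ∀ i, T.dist w (r (m + i)) = T.dist w (r (n + i)) := by
      intro i
      calc T.dist w (r (m + i)) = T.dist (g • w) (g • r (m + i)) := (hdist g _ _).symm
        _ = T.dist w (r (n + i)) := by rw [hw, h i]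
    have hmn : m = n := by
      by_contra hne
      rcases Nat.lt_or_ge m n with h' | h'
      · exact helper w m n h' hper
      · exact helper w n m (by omega) (fun i => (hper i).symm)
    rw [tspec g m n h, hmn]; ring
  -- define the homomorphism
  set φ : G →* Multiplicative ℤ :=
    MonoidHom.mk' (fun g => Multiplicative.ofAdd (t g))
      (by
        intro g h
        show Multiplicative.ofAdd (t (g * h)) =
          Multiplicative.ofAdd (t g) * Multiplicative.ofAdd (t h)
        rw [hhom g h]; rfl) with hφ
  refine ⟨φ.ker, MonoidHom.normal_ker φ, ?_, φ, rfl⟩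
  ext g
  simp only [SetLike.mem_coe, MonoidHom.mem_ker, Set.mem_setOf_eq, hφ,
    MonoidHom.mk'_apply, ofAdd_eq_one]
  constructor
  · intro hg
    obtain ⟨m, n, h⟩ := hfix g
    have := tspec g m n h
    rw [hg] at this
    have hmn : m = n := by omega
    left
    refine ⟨r m, ?_⟩
    have h0 := h 0
    rw [hmn] at h0 ⊢
    simpa using h0
  · rintro (⟨w, hw⟩ | ⟨a, b, _, hab, hba⟩)
    · exact hfixzero g w hw
    · have : (g * g) • a = a := by rw [mul_smul, hab, hba]
      have h0 := hfixzero (g * g) a this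
      rw [hhom g g] at h0
      omega
end

section
/- Let k be a field and let Aut k[x,y] denote the group of k-algebra automorphisms of the polynomial ring k[x,y] in two variables. Let C ≤ Aut k[x,y] be the subgroup of all automorphisms γ for which there exist a, d ∈ k∖{0} and b, c, e ∈ k with γ(x) = a·x + b and γ(y) = c·x + d·y + e. Then there exists α ∈ Aut k[x,y] such that α⁻¹Cα ∩ C = {1}; that is, for every γ ∈ C, if α⁻¹γα ∈ C then γ is the identity automorphism. -/
open MvPolynomial

/-- The subgroup `C` of `Aut k[x,y]`: triangular-affine automorphisms
`x ↦ a·x + b`, `y ↦ c·x + d·y + e` with `a, d ≠ 0`. -/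
def IsTriangularAffine (k : Type*) [Field k]
    (γ : MvPolynomial (Fin 2) k ≃ₐ[k] MvPolynomial (Fin 2) k) : Prop :=
  ∃ a b c d e : k, a ≠ 0 ∧ d ≠ 0 ∧
    γ (X 0) = C a * X 0 + C b ∧
    γ (X 1) = C c * X 0 + C d * X 1 + C e

namespace Stmt6Aux

variable {k : Type*} [Field k]

open Polynomial in
lemma coeff_lin_pow (a s : k) (n m : ℕ) :
    ((Polynomial.C a * (Polynomial.X + Polynomial.C s)) ^ n).coeff m
      = a ^ n * (s ^ (n - m) * (n.choose m)) := by
  rw [mul_pow, ← Polynomial.C_pow, Polynomial.coeff_C_mul, Polynomial.coeff_X_add_C_pow]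

lemma key (a s c d e e' : k) (ha : a ≠ 0) (hd : d ≠ 0)
    (h : Polynomial.C c * Polynomial.X + Polynomial.C e
        + (Polynomial.C a * (Polynomial.X + Polynomial.C s)) ^ 2
        + (Polynomial.C a * (Polynomial.X + Polynomial.C s)) ^ 4
        + (Polynomial.C a * (Polynomial.X + Polynomial.C s)) ^ 7
      = Polynomial.C d * (Polynomial.X ^ 2 + Polynomial.X ^ 4 + Polynomial.X ^ 7)
        + Polynomial.C e') :
    a = 1 ∧ s = 0 ∧ d = 1 ∧ c = 0 := by
  have co : ∀ m : ℕ, (Polynomial.C c * Polynomial.X + Polynomial.C e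
        + (Polynomial.C a * (Polynomial.X + Polynomial.C s)) ^ 2
        + (Polynomial.C a * (Polynomial.X + Polynomial.C s)) ^ 4
        + (Polynomial.C a * (Polynomial.X + Polynomial.C s)) ^ 7).coeff m
      = (Polynomial.C d * (Polynomial.X ^ 2 + Polynomial.X ^ 4 + Polynomial.X ^ 7)
        + Polynomial.C e').coeff m := fun m => by rw [h]
  have E7 := co 7
  have E6 := co 6
  have E4 := co 4
  have E3 := co 3
  have E2 := co 2
  have E1 := co 1
  simp [coeff_lin_pow, Polynomial.coeff_X, Polynomial.coeff_C,
    Polynomial.coeff_C_mul, Polynomial.coeff_X_pow, Polynomial.coeff_add] at E7 E6 E4 E3 E2 E1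
  norm_num [Nat.choose, -mul_eq_zero] at E7 E6 E4 E3 E2 E1
  -- E7 : a^7 = d, E6 : a^7*(s*7)=0, E4 : a^4 + a^7*(s^3*35) = d,
  -- E3 : a^4*(s*4) + a^7*(s^4*35) = 0, E2 : a^2 + a^4*(s^2*6)+a^7*(s^5*21)=d,
  -- E1 : c + a^2*(s*2)+a^4*(s^3*4)+a^7*(s^6*7) = 0
  have ha7 : a ^ 7 ≠ 0 := pow_ne_zero _ ha
  have ha4 : a ^ 4 ≠ 0 := pow_ne_zero _ ha
  have h7s : (7 : k) * s = 0 := by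
    rcases mul_eq_zero.mp E6 with h' | h'
    · exact absurd h' ha7
    · linear_combination h'
  have h4s : (4 : k) * s = 0 := by
    have h4 : a ^ 4 * ((4 : k) * s) = 0 := by
      linear_combination E3 - a ^ 7 * 5 * s ^ 3 * h7s
    rcases mul_eq_zero.mp h4 with h' | h'
    · exact absurd h' ha4
    · linear_combination h'
  have hs : s = 0 := by linear_combination 2 * h4s - h7s
  have ha2 : a ^ 2 = 1 := by
    have haux : a ^ 2 * a ^ 2 = a ^ 2 * 1 := by
      linear_combination E4 - E2 - (35 * a ^ 7 * s ^ 2 - 6 * a ^ 4 * s - 21 * a ^ 7 * s ^ 4) * hs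
    exact mul_left_cancel₀ (pow_ne_zero 2 ha) haux
  have ha3 : a ^ 3 = 1 := by
    have haux : a ^ 4 * a ^ 3 = a ^ 4 * 1 := by
      linear_combination E7 - E4 + 35 * a ^ 7 * s ^ 2 * hs
    exact mul_left_cancel₀ ha4 haux
  have ha1 : a = 1 := by linear_combination ha3 - a * ha2
  have hd1 : d = 1 := by
    linear_combination -E7 + (a ^ 6 + a ^ 5 + a ^ 4 + a ^ 3 + a ^ 2 + a + 1) * ha1
  have hc : c = 0 := by
    linear_combination E1 - (2 * a ^ 2 + 4 * a ^ 4 * s ^ 2 + 7 * a ^ 7 * s ^ 5) * hs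
  exact ⟨ha1, hs, hd1, hc⟩

noncomputable def sig : MvPolynomial (Fin 2) k ≃ₐ[k] MvPolynomial (Fin 2) k :=
  AlgEquiv.ofAlgHom
    (aeval ![X 0, X 1 + ((X 0) ^ 2 + (X 0) ^ 4 + (X 0) ^ 7)])
    (aeval ![X 0, X 1 - ((X 0) ^ 2 + (X 0) ^ 4 + (X 0) ^ 7)])
    (by ext i : 1; fin_cases i <;> simp <;> ring)
    (by ext i : 1; fin_cases i <;> simp <;> ring)

noncomputable def tau : MvPolynomial (Fin 2) k ≃ₐ[k] MvPolynomial (Fin 2) k :=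
  AlgEquiv.ofAlgHom
    (aeval ![X 0 + ((X 1) ^ 2 + (X 1) ^ 4 + (X 1) ^ 7), X 1])
    (aeval ![X 0 - ((X 1) ^ 2 + (X 1) ^ 4 + (X 1) ^ 7), X 1])
    (by ext i : 1; fin_cases i <;> simp <;> ring)
    (by ext i : 1; fin_cases i <;> simp <;> ring)

lemma sig_X0 : (sig (k := k)) (X 0) = X 0 := by simp [sig]
lemma sig_X1 : (sig (k := k)) (X 1) = X 1 + ((X 0) ^ 2 + (X 0) ^ 4 + (X 0) ^ 7) := by
  simp [sig]
lemma tau_X0 : (tau (k := k)) (X 0) = X 0 + ((X 1) ^ 2 + (X 1) ^ 4 + (X 1) ^ 7) := by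
  simp [tau]
lemma tau_X1 : (tau (k := k)) (X 1) = X 1 := by simp [tau]

/-- The evaluation `X 0 ↦ 0`, `X 1 ↦ X`. -/
noncomputable def psi : MvPolynomial (Fin 2) k →ₐ[k] Polynomial k :=
  aeval ![0, Polynomial.X]

/-- The evaluation `X 0 ↦ X`, `X 1 ↦ 0`. -/
noncomputable def phi : MvPolynomial (Fin 2) k →ₐ[k] Polynomial k :=
  aeval ![Polynomial.X, 0]

lemma psi_X0 : (psi (k := k)) (X 0) = 0 := by simp [psi]
lemma psi_X1 : (psi (k := k)) (X 1) = Polynomial.X := by simp [psi]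
lemma phi_X0 : (phi (k := k)) (X 0) = Polynomial.X := by simp [phi]
lemma phi_X1 : (phi (k := k)) (X 1) = 0 := by simp [phi]
lemma psi_C (x : k) : (psi (k := k)) (C x) = Polynomial.C x := by simp [psi]
lemma phi_C (x : k) : (phi (k := k)) (C x) = Polynomial.C x := by simp [phi]

lemma key0 (d c' d' u v : k)
    (h : Polynomial.C d * Polynomial.X + Polynomial.C u
      = Polynomial.C c' * (Polynomial.X ^ 2 + Polynomial.X ^ 4 + Polynomial.X ^ 7)
        + Polynomial.C d' * Polynomial.X + Polynomial.C v) :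
    c' = 0 ∧ d' = d := by
  have co : ∀ m : ℕ, (Polynomial.C d * Polynomial.X + Polynomial.C u).coeff m
      = (Polynomial.C c' * (Polynomial.X ^ 2 + Polynomial.X ^ 4 + Polynomial.X ^ 7)
        + Polynomial.C d' * Polynomial.X + Polynomial.C v).coeff m := fun m => by rw [h]
  have E7 := co 7
  have E1 := co 1
  simp [Polynomial.coeff_X, Polynomial.coeff_C, Polynomial.coeff_C_mul,
    Polynomial.coeff_X_pow, Polynomial.coeff_add] at E7 E1
  exact ⟨E7.symm, E1.symm⟩

set_option maxRecDepth 20000 in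
set_option maxHeartbeats 2000000 in
theorem main (γ : MvPolynomial (Fin 2) k ≃ₐ[k] MvPolynomial (Fin 2) k)
    (hγ : IsTriangularAffine k γ)
    (hβ : IsTriangularAffine k ((sig * tau)⁻¹ * γ * (sig * tau))) : γ = 1 := by
  obtain ⟨a, b, c, d, e, ha, hd, hx, hy⟩ := hγ
  obtain ⟨a', b', c', d', e', ha', hd', hx', hy'⟩ := hβ
  set α : MvPolynomial (Fin 2) k ≃ₐ[k] MvPolynomial (Fin 2) k := sig * tau with hα
  have hαC : ∀ x : k, α (C x) = C x := fun x => by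
    rw [show (C x : MvPolynomial (Fin 2) k) = algebraMap k _ x from rfl]
    exact α.commutes x
  have hγC : ∀ x : k, γ (C x) = C x := fun x => by
    rw [show (C x : MvPolynomial (Fin 2) k) = algebraMap k _ x from rfl]
    exact γ.commutes x
  have hαx : α (X 0) = X 0 +
      ((X 1 + ((X 0) ^ 2 + (X 0) ^ 4 + (X 0) ^ 7)) ^ 2
        + (X 1 + ((X 0) ^ 2 + (X 0) ^ 4 + (X 0) ^ 7)) ^ 4
        + (X 1 + ((X 0) ^ 2 + (X 0) ^ 4 + (X 0) ^ 7)) ^ 7) := by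
    rw [hα, AlgEquiv.mul_apply, tau_X0, map_add, sig_X0, map_add, map_add,
      map_pow, map_pow, map_pow, sig_X1]
  have hαy : α (X 1) = X 1 + ((X 0) ^ 2 + (X 0) ^ 4 + (X 0) ^ 7) := by
    rw [hα, AlgEquiv.mul_apply, tau_X1, sig_X1]
  have hcomm : γ * α = α * (α⁻¹ * γ * α) := by group
  -- Equation (II)
  have hII : γ (α (X 1)) = C c' * α (X 0) + C d' * α (X 1) + C e' := by
    rw [← AlgEquiv.mul_apply, hcomm, AlgEquiv.mul_apply, hy', map_add, map_add,
      map_mul, map_mul, hαC, hαC, hαC]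
  -- Expand LHS of (II)
  have hIIL : γ (α (X 1)) = (C c * X 0 + C d * X 1 + C e)
      + ((C a * X 0 + C b) ^ 2 + (C a * X 0 + C b) ^ 4 + (C a * X 0 + C b) ^ 7) := by
    rw [hαy, map_add, map_add, map_add, map_pow, map_pow, map_pow, hx, hy]
  -- Apply psi : X0 ↦ 0, X1 ↦ X
  have hIIpsi := congrArg (psi (k := k)) (hIIL.symm.trans hII)
  simp only [map_add, map_mul, map_pow, psi_X0, psi_X1, psi_C, hαx, hαy] at hIIpsi
  -- now hIIpsi is a univariate identity; massage and extract c' = 0, d' = d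
  have hkey0 := key0 d c' d' (e + (b ^ 2 + b ^ 4 + b ^ 7)) e' ?keq
  case keq =>
    simp only [map_add, map_pow]
    linear_combination hIIpsi
  obtain ⟨hc'0, hd'd⟩ := hkey0
  -- Apply phi : X0 ↦ X, X1 ↦ 0 to (II)
  have hIIphi := congrArg (phi (k := k)) (hIIL.symm.trans hII)
  simp only [map_add, map_mul, map_pow, phi_X0, phi_X1, phi_C, hαx, hαy, hc'0, map_zero, zero_mul, zero_add, add_zero] at hIIphi
  -- get key-shaped identity
  have hb : Polynomial.C a * (Polynomial.X + Polynomial.C (a⁻¹ * b))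
      = Polynomial.C a * Polynomial.X + Polynomial.C b := by
    rw [mul_add, ← Polynomial.C_mul, mul_inv_cancel_left₀ ha]
  have hkey1 := key a (a⁻¹ * b) c d' e e' ha hd' ?keq1
  case keq1 =>
    rw [hb]
    linear_combination hIIphi
  obtain ⟨ha1, hs0, hd'1, hc0⟩ := hkey1
  have hb0 : b = 0 := by
    have := mul_inv_cancel_left₀ ha b
    rw [hs0] at this
    linear_combination -this
  have hd1 : d = 1 := hd'd.symm.trans hd'1
  -- Equation (I)
  have hx1 : γ (X 0) = X 0 := by rw [hx, ha1, hb0]; simp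
  have hy1 : γ (X 1) = X 1 + C e := by rw [hy, hc0, hd1]; simp
  have hI : γ (α (X 0)) = C a' * α (X 0) + C b' := by
    rw [← AlgEquiv.mul_apply, hcomm, AlgEquiv.mul_apply, hx', map_add, map_mul,
      hαC, hαC]
  have hIL : γ (α (X 0)) = X 0 +
      (((X 1 + C e) + ((X 0) ^ 2 + (X 0) ^ 4 + (X 0) ^ 7)) ^ 2
        + ((X 1 + C e) + ((X 0) ^ 2 + (X 0) ^ 4 + (X 0) ^ 7)) ^ 4
        + ((X 1 + C e) + ((X 0) ^ 2 + (X 0) ^ 4 + (X 0) ^ 7)) ^ 7) := by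
    rw [hαx, map_add, map_add, map_add, map_pow, map_pow, map_pow, map_add,
      map_add, map_add, map_pow, map_pow, map_pow, hx1, hy1]
  have hIpsi := congrArg (psi (k := k)) (hIL.symm.trans hI)
  simp only [map_add, map_mul, map_pow, psi_X0, psi_X1, psi_C, hαx, hαy] at hIpsi
  have hkey2 := key 1 e 0 a' 0 b' one_ne_zero ha' ?keq2
  case keq2 =>
    simp only [map_one, map_zero]
    linear_combination hIpsi
  obtain ⟨-, he0, -, -⟩ := hkey2
  -- conclude γ = 1
  apply AlgEquiv.ext
  intro p
  rw [AlgEquiv.one_apply]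
  induction p using MvPolynomial.induction_on with
  | C x => exact hγC x
  | add p q hp hq => rw [map_add, hp, hq]
  | mul_X p i hp =>
    rw [map_mul, hp]
    congr 1
    fin_cases i
    · show γ (X 0) = X 0
      rw [hx, ha1, hb0]; simp
    · show γ (X 1) = X 1
      rw [hy, hc0, hd1, he0]; simp

end Stmt6Aux

/-- there exists `α ∈ Aut k[x,y]` with `α⁻¹Cα ∩ C = {1}`. -/
theorem stmt_6 (k : Type*) [Field k] :
    ∃ α : MvPolynomial (Fin 2) k ≃ₐ[k] MvPolynomial (Fin 2) k,
      ∀ γ : MvPolynomial (Fin 2) k ≃ₐ[k] MvPolynomial (Fin 2) k,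
        IsTriangularAffine k γ → IsTriangularAffine k (α⁻¹ * γ * α) → γ = 1 := by
  exact ⟨Stmt6Aux.sig * Stmt6Aux.tau, fun γ => Stmt6Aux.main γ⟩
end

section
/- Let G be a group, B ≤ G a subgroup, and φ : G ≃ B an isomorphism of G onto B, and let H be the corresponding ascending HNN extension of G, with canonical embedding of : G → H and stable letter t satisfying t·of(g)·t⁻¹ = of(φ(g)) for all g ∈ G. Let N = ⋃_{n∈ℕ} t⁻ⁿ·of(G)·tⁿ. Then N is a normal subgroup of H, and the canonical homomorphism H → ℤ determined by t ↦ 1 and of(g) ↦ 0 for all g ∈ G has kernel exactly N; in particular H/N is infinite cyclic. -/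
/-- in the ascending HNN extension `H` of `G` along `φ : G ≃ B`, the set
`N = ⋃ₙ t⁻ⁿ·of(G)·tⁿ` is a normal subgroup and is the kernel of the canonical
homomorphism `H → ℤ` sending `t ↦ 1` and `of(g) ↦ 0`; in particular `H/N ≅ ℤ`. -/
theorem stmt_8 {G : Type*} [Group G] (B : Subgroup G) (φ : G ≃* B) :
    ∃ N : Subgroup (HNNExtension G ⊤ B (Subgroup.topEquiv.trans φ)),
      N.Normal ∧
      (N : Set (HNNExtension G ⊤ B (Subgroup.topEquiv.trans φ))) =
        ⋃ n : ℕ, (fun g : G =>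
          (HNNExtension.t)⁻¹ ^ n * HNNExtension.of g * HNNExtension.t ^ n) '' Set.univ ∧
      ∃ ψ : HNNExtension G ⊤ B (Subgroup.topEquiv.trans φ) →* Multiplicative ℤ,
        ψ HNNExtension.t = Multiplicative.ofAdd 1 ∧
        (∀ g : G, ψ (HNNExtension.of g) = 1) ∧
        ψ.ker = N := by
  set φ' := Subgroup.topEquiv.trans φ with hφ'
  set H := HNNExtension G ⊤ B φ' with hH
  set t : H := HNNExtension.t with ht
  set of : G →* H := HNNExtension.of with hof
  -- the canonical homomorphism to ℤ
  let ψ : H →* Multiplicative ℤ :=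
    HNNExtension.lift (1 : G →* Multiplicative ℤ) (Multiplicative.ofAdd 1)
      (by intro a; simp)
  have ψt : ψ t = Multiplicative.ofAdd 1 := HNNExtension.lift_t _ _ _
  have ψof : ∀ g : G, ψ (of g) = 1 := fun g => HNNExtension.lift_of _ _ _ g
  -- the tower of conjugated copies of `of.range`
  let U : ℕ → Subgroup H := fun n =>
    of.range.map (MulAut.conj (t⁻¹ ^ n)).toMonoidHom
  have memU : ∀ (n : ℕ) (x : H), x ∈ U n ↔ ∃ g : G, t⁻¹ ^ n * of g * t ^ n = x := by
    intro n x
    constructor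
    · rintro ⟨y, ⟨g, rfl⟩, rfl⟩
      exact ⟨g, by simp [MulAut.conj, mul_assoc]; exact (inv_inv _).symm⟩
    · rintro ⟨g, rfl⟩
      exact ⟨of g, ⟨g, rfl⟩, by simp [MulAut.conj, mul_assoc]⟩
  have hrel : ∀ g : G, of g = t⁻¹ * of (φ g : G) * t := by
    intro g
    have := HNNExtension.equiv_eq_conj (φ := φ') ⟨g, trivial⟩
    have h2 : (φ' ⟨g, trivial⟩ : G) = (φ g : G) := rfl
    rw [h2] at this
    rw [this]
    rw [ht, hof]
    group
  have Umono : Monotone U := by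
    apply monotone_nat_of_le_succ
    intro n x hx
    rw [memU] at hx ⊢
    obtain ⟨g, rfl⟩ := hx
    refine ⟨(φ g : G), ?_⟩
    rw [hrel g]
    group
  let N' : Subgroup H := ⨆ n, U n
  have hdir : Directed (· ≤ ·) U := Umono.directed_le
  have memN' : ∀ x : H, x ∈ N' ↔ ∃ n, x ∈ U n := fun x =>
    Subgroup.mem_iSup_of_directed hdir
  -- conjugation by t and t⁻¹ preserves N'
  have conj_t : ∀ u ∈ N', t * u * t⁻¹ ∈ N' := by
    intro u hu
    rw [memN'] at hu ⊢
    obtain ⟨n, hn⟩ := hu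
    rw [memU] at hn
    obtain ⟨g, rfl⟩ := hn
    match n with
    | 0 =>
      refine ⟨0, (memU 0 _).2 ⟨(φ g : G), ?_⟩⟩
      rw [hrel g]
      group
    | m + 1 =>
      refine ⟨m, (memU m _).2 ⟨g, ?_⟩⟩
      group
  have conj_tinv : ∀ u ∈ N', t⁻¹ * u * t ∈ N' := by
    intro u hu
    rw [memN'] at hu ⊢
    obtain ⟨n, hn⟩ := hu
    rw [memU] at hn
    obtain ⟨g, rfl⟩ := hn
    refine ⟨n + 1, (memU (n + 1) _).2 ⟨g, ?_⟩⟩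
    group
  have conj_zpow : ∀ (k : ℤ), ∀ u ∈ N', t ^ k * u * t ^ (-k) ∈ N' := by
    intro k
    induction k using Int.induction_on with
    | zero => intro u hu; simpa using hu
    | succ k ih =>
      intro u hu
      have := conj_t _ (ih u hu)
      have heq : t * (t ^ (k : ℤ) * u * t ^ (-(k : ℤ))) * t⁻¹
          = t ^ ((k : ℤ) + 1) * u * t ^ (-((k : ℤ) + 1)) := by group
      rwa [heq] at this
    | pred k ih =>
      intro u hu
      have := conj_tinv _ (ih u hu)
      have heq : t⁻¹ * (t ^ (-(k : ℤ)) * u * t ^ (-(-(k : ℤ)))) * t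
          = t ^ (-(k : ℤ) - 1) * u * t ^ (-(-(k : ℤ) - 1)) := by group
      rwa [heq] at this
  -- every element is (element of N') * t^k
  have main : ∀ h : H, h * t ^ (-(ψ h).toAdd) ∈ N' := by
    intro h
    induction h using HNNExtension.induction_on with
    | of g =>
      rw [ψof g]
      simpa using (memN' _).2 ⟨0, (memU 0 _).2 ⟨g, by simp [hof]⟩⟩
    | t =>
      rw [ψt]
      simpa [← ht] using N'.one_mem
    | mul x y hx hy =>
      rw [map_mul]
      set a : ℤ := (ψ x).toAdd with ha
      set b : ℤ := (ψ y).toAdd with hb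
      have htoAdd : ((ψ x * ψ y).toAdd : ℤ) = a + b := rfl
      rw [htoAdd]
      have key : x * y * t ^ (-(a + b))
          = (x * t ^ (-a)) * (t ^ a * (y * t ^ (-b)) * t ^ (-a)) := by group
      rw [key]
      exact N'.mul_mem hx (conj_zpow a _ hy)
    | inv x hx =>
      rw [map_inv]
      set a : ℤ := (ψ x).toAdd with ha
      have htoAdd : (((ψ x)⁻¹).toAdd : ℤ) = -a := rfl
      rw [htoAdd, neg_neg]
      have key : x⁻¹ * t ^ a = t ^ (-a) * (x * t ^ (-a))⁻¹ * t ^ (-(-a)) := by group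
      rw [key]
      exact conj_zpow (-a) _ (N'.inv_mem hx)
  -- kernel equals N'
  have hker : ψ.ker = N' := by
    apply le_antisymm
    · intro h hh
      have h0 : ((ψ h).toAdd : ℤ) = 0 := by
        rw [MonoidHom.mem_ker] at hh
        rw [hh]; rfl
      have := main h
      rwa [h0, neg_zero, zpow_zero, mul_one] at this
    · refine iSup_le fun n => ?_
      intro x hx
      rw [memU] at hx
      obtain ⟨g, rfl⟩ := hx
      rw [MonoidHom.mem_ker]
      rw [map_mul, map_mul, map_pow, map_pow, map_inv, ψt, ψof g]
      group
  refine ⟨ψ.ker, MonoidHom.normal_ker ψ, ?_, ψ, ψt, ψof, rfl⟩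
  rw [hker]
  rw [Subgroup.coe_iSup_of_directed hdir]
  refine Set.iUnion_congr fun n => ?_
  ext x
  rw [Set.image_univ, Set.mem_range, SetLike.mem_coe, memU]
end

section
/- Let k ∈ ℕ and let a group G act on a simplicial tree T by graph automorphisms. Suppose the action is k-acylindrical in the sense of Sela. Then the action is acylindrical: for every ε ∈ ℕ, for all vertices x, y with d(x,y) > k + 2ε + 2, the set {g ∈ G : d(x, g·x) ≤ ε and d(y, g·y) ≤ ε} has fewer than 2(2ε+1) elements. -/
open SimpleGraph Walk

section TreeAux

variable {V : Type*} {T : SimpleGraph V}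

private lemma aux_append_isPath {u v w : V} {p : T.Walk u v} {q : T.Walk v w}
    (hp : p.IsPath) (hq : q.IsPath)
    (hdisj : ∀ z, z ∈ p.support → z ∈ q.support → z = v) :
    (p.append q).IsPath := by
  have hq' := hq.support_nodup
  rw [q.support_eq_cons, List.nodup_cons] at hq'
  rw [Walk.isPath_def, Walk.support_append]
  refine List.Nodup.append hp.support_nodup hq'.2 ?_
  intro z hzp hzq
  have hz : z ∈ q.support := by
    rw [q.support_eq_cons]; exact List.mem_cons_of_mem _ hzq
  have := hdisj z hzp hz
  subst this
  exact hq'.1 hzq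

private lemma tree_path_length (hT : T.IsTree) {u v : V} {p : T.Walk u v} (hp : p.IsPath) :
    p.length = T.dist u v := by
  obtain ⟨q, hq, hql⟩ := hT.isConnected.exists_path_of_dist u v
  have hpq : p = q :=
    congrArg Subtype.val (hT.IsAcyclic.path_unique (⟨p, hp⟩ : T.Path u v) ⟨q, hq⟩)
  rw [hpq, hql]

private lemma tree_split (hT : T.IsTree) {u v z : V} {p : T.Walk u v} (hp : p.IsPath)
    (hz : z ∈ p.support) : T.dist u z + T.dist z v = T.dist u v := by
  classical
  have h1 := tree_path_length hT (hp.takeUntil hz)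
  have h2 := tree_path_length hT (hp.dropUntil hz)
  have h3 : (p.takeUntil z hz).length + (p.dropUntil z hz).length = p.length := by
    rw [← Walk.length_append, p.take_spec hz]
  have h4 := tree_path_length hT hp
  omega

private lemma tree_eq_of_dist_zero (hT : T.IsTree) {m n : V} (h : T.dist m n = 0) : m = n := by
  by_contra hne
  exact (SimpleGraph.dist_ne_zero_iff_ne_and_reachable.mpr
    ⟨hne, hT.isConnected.preconnected m n⟩) h

private lemma tree_mem_of_dist (hT : T.IsTree) {u v z : V}
    (h : T.dist u z + T.dist z v = T.dist u v) {p : T.Walk u v} (hp : p.IsPath) :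
    z ∈ p.support := by
  obtain ⟨q, hq, hql⟩ := hT.isConnected.exists_path_of_dist u z
  obtain ⟨r, hr, hrl⟩ := hT.isConnected.exists_path_of_dist z v
  have hdisj : ∀ w, w ∈ q.support → w ∈ r.support → w = z := by
    intro w hwq hwr
    have e1 := tree_split hT hq hwq
    have e2 := tree_split hT hr hwr
    have e3 : T.dist u v ≤ T.dist u w + T.dist w v := hT.isConnected.dist_triangle
    have e4 : T.dist w z = T.dist z w := SimpleGraph.dist_comm
    exact (tree_eq_of_dist_zero hT (by omega)).symm
  have hqr : (q.append r).IsPath := aux_append_isPath hq hr hdisj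
  have heq : q.append r = p :=
    congrArg Subtype.val (hT.IsAcyclic.path_unique (⟨q.append r, hqr⟩ : T.Path u v) ⟨p, hp⟩)
  rw [← heq, Walk.mem_support_append_iff]
  exact Or.inl q.end_mem_support

private lemma tree_collinear (hT : T.IsTree) {a b m n : V}
    (hm : T.dist a m + T.dist m b = T.dist a b)
    (hn : T.dist a n + T.dist n b = T.dist a b)
    (hle : T.dist a m ≤ T.dist a n) :
    T.dist a m + T.dist m n = T.dist a n ∧ T.dist m n + T.dist n b = T.dist m b := by
  classical
  obtain ⟨p, hp, hpl⟩ := hT.isConnected.exists_path_of_dist a b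
  have hmp : m ∈ p.support := tree_mem_of_dist hT hm hp
  have hnp : n ∈ p.support := tree_mem_of_dist hT hn hp
  have hsplit : n ∈ (p.takeUntil m hmp).support ∨ n ∈ (p.dropUntil m hmp).support := by
    rw [← Walk.mem_support_append_iff, p.take_spec hmp]; exact hnp
  have hlen1 : (p.takeUntil m hmp).length = T.dist a m := tree_path_length hT (hp.takeUntil hmp)
  have hlen2 : (p.dropUntil m hmp).length = T.dist m b := tree_path_length hT (hp.dropUntil hmp)
  rcases hsplit with hn1 | hn2
  · have e := tree_split hT (hp.takeUntil hmp) hn1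
    have hnm : n = m := tree_eq_of_dist_zero hT (by omega)
    subst hnm
    have hz : T.dist n n = 0 := SimpleGraph.dist_self
    constructor <;> omega
  · have e := tree_split hT (hp.dropUntil hmp) hn2
    exact ⟨by omega, e⟩

private lemma tree_eq_of_dist (hT : T.IsTree) {a b m n : V}
    (hm : T.dist a m + T.dist m b = T.dist a b)
    (hn : T.dist a n + T.dist n b = T.dist a b)
    (heq : T.dist a m = T.dist a n) : m = n := by
  have h := (tree_collinear hT hm hn (le_of_eq heq)).1
  exact tree_eq_of_dist_zero hT (by omega)

private lemma tree_median (hT : T.IsTree) (a b c : V) :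
    ∃ m : V, T.dist a m + T.dist m b = T.dist a b ∧
      T.dist a m + T.dist m c = T.dist a c ∧
      T.dist b m + T.dist m c = T.dist b c := by
  classical
  obtain ⟨p, hp, hpl⟩ := hT.isConnected.exists_path_of_dist a b
  obtain ⟨q, hq, hql⟩ := hT.isConnected.exists_path_of_dist a c
  set s : Finset V := p.support.toFinset.filter (fun z => z ∈ q.support) with hs
  have hsne : s.Nonempty :=
    ⟨a, by simp [hs, List.mem_toFinset, Walk.start_mem_support]⟩
  obtain ⟨m, hms, hmax⟩ := s.exists_max_image (fun z => T.dist a z) hsne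
  have hmp : m ∈ p.support := by
    have := (Finset.mem_filter.mp hms).1
    simpa [List.mem_toFinset] using this
  have hmq : m ∈ q.support := (Finset.mem_filter.mp hms).2
  have e1 : T.dist a m + T.dist m b = T.dist a b := tree_split hT hp hmp
  have e2 : T.dist a m + T.dist m c = T.dist a c := tree_split hT hq hmq
  refine ⟨m, e1, e2, ?_⟩
  have hP2 : (p.dropUntil m hmp).IsPath := hp.dropUntil hmp
  have hQ2 : (q.dropUntil m hmq).IsPath := hq.dropUntil hmq
  have hdisj : ∀ z, z ∈ (p.dropUntil m hmp).reverse.support →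
      z ∈ (q.dropUntil m hmq).support → z = m := by
    intro z hz1 hz2
    rw [Walk.support_reverse, List.mem_reverse] at hz1
    have hzp : z ∈ p.support := p.support_dropUntil_subset hmp hz1
    have hzq : z ∈ q.support := q.support_dropUntil_subset hmq hz2
    have hzs : z ∈ s := by
      rw [hs, Finset.mem_filter, List.mem_toFinset]; exact ⟨hzp, hzq⟩
    have hmaxz := hmax z hzs
    have e3 := tree_split hT hP2 hz1
    have e4 := tree_split hT hp hzp
    exact (tree_eq_of_dist_zero hT (by omega : T.dist m z = 0)).symm
  have hW : ((p.dropUntil m hmp).reverse.append (q.dropUntil m hmq)).IsPath :=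
    aux_append_isPath hP2.reverse hQ2 hdisj
  have hWl : ((p.dropUntil m hmp).reverse.append (q.dropUntil m hmq)).length
      = T.dist m b + T.dist m c := by
    rw [Walk.length_append, Walk.length_reverse, tree_path_length hT hP2,
      tree_path_length hT hQ2]
  have hfin := tree_path_length hT hW
  rw [hWl] at hfin
  have hc : T.dist b m = T.dist m b := SimpleGraph.dist_comm
  omega

private lemma tree_between (hT : T.IsTree) {a b c m : V}
    (h : T.dist a m + T.dist m b = T.dist a b) (hc : T.dist a c ≤ T.dist a m) :
    T.dist c m + T.dist m b = T.dist c b := by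
  obtain ⟨m0, e1, e2, e3⟩ := tree_median hT a b c
  have h0 : T.dist a m0 ≤ T.dist a m := le_trans (by omega) hc
  have h1 := (tree_collinear hT e1 h h0).2
  have t1 : T.dist c m ≤ T.dist c m0 + T.dist m0 m := hT.isConnected.dist_triangle
  have t2 : T.dist c b ≤ T.dist c m + T.dist m b := hT.isConnected.dist_triangle
  have c1 : T.dist c m0 = T.dist m0 c := SimpleGraph.dist_comm
  have c2 : T.dist c b = T.dist b c := SimpleGraph.dist_comm
  have c3 : T.dist b m0 = T.dist m0 b := SimpleGraph.dist_comm
  omega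

private lemma dist_getVert_le (hconn : T.Connected) :
    ∀ {a b : V} (p : T.Walk a b) (i : ℕ), T.dist a (p.getVert i) ≤ i := by
  intro a b p
  induction p with
  | nil =>
    intro i
    rw [Walk.getVert_of_length_le _ (by simp)]
    simp [SimpleGraph.dist_self]
  | @cons a' b' c' hadj q ih =>
    intro i
    cases i with
    | zero => simp [SimpleGraph.dist_self]
    | succ n =>
      rw [Walk.getVert_cons_succ]
      have h1 : T.dist a' (q.getVert n) ≤ T.dist a' b' + T.dist b' (q.getVert n) :=
        hconn.dist_triangle
      have h2 : T.dist a' b' = 1 := SimpleGraph.dist_eq_one_iff_adj.mpr hadj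
      have h3 := ih n
      omega

end TreeAux

/-- a `k`-acylindrical (in the sense of Sela) action on a tree is acylindrical:
points at distance more than `k + 2ε + 2` have pointwise ε-stabilizer of size
less than `2(2ε+1)`. -/
theorem stmt_9 {V G : Type*} [Group G] [MulAction G V] (T : SimpleGraph V)
    (hT : T.IsTree)
    (haut : ∀ (g : G) (a b : V), T.Adj (g • a) (g • b) ↔ T.Adj a b)
    (k : ℕ)
    (hacyl : ∀ g : G, g ≠ 1 → ∀ a b : V, g • a = a → g • b = b → T.dist a b ≤ k) :
    ∀ ε : ℕ, ∀ x y : V, k + 2 * ε + 2 < T.dist x y →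
      {g : G | T.dist (g • x) x ≤ ε ∧ T.dist (g • y) y ≤ ε}.Finite ∧
      Set.ncard {g : G | T.dist (g • x) x ≤ ε ∧ T.dist (g • y) y ≤ ε} < 2 * (2 * ε + 1) := by
  intro ε x y hL
  classical
  have hconn := hT.isConnected
  -- the action is by isometries
  have hlesm : ∀ (g : G) (a b : V), T.dist (g • a) (g • b) ≤ T.dist a b := by
    intro g a b
    obtain ⟨p, hp⟩ := hconn.exists_walk_length_eq_dist a b
    have := SimpleGraph.dist_le
      (p.map ⟨fun z => g • z, fun {c d} h => (haut g c d).mpr h⟩)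
    rwa [Walk.length_map, hp] at this
  have hiso : ∀ (g : G) (a b : V), T.dist (g • a) (g • b) = T.dist a b := by
    intro g a b
    refine le_antisymm (hlesm g a b) ?_
    have := hlesm g⁻¹ (g • a) (g • b)
    rwa [inv_smul_smul, inv_smul_smul] at this
  set S := {g : G | T.dist (g • x) x ≤ ε ∧ T.dist (g • y) y ≤ ε} with hSdef
  -- geodesic from x to y and two marked points on it
  obtain ⟨P, hP, hPl⟩ := hconn.exists_path_of_dist x y
  have hgv2 : ∀ i, i ≤ P.length → T.dist (P.getVert i) y ≤ P.length - i := by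
    intro i hi
    have h1 := dist_getVert_le hconn P.reverse (P.length - i)
    rw [Walk.getVert_reverse] at h1
    have h2 : P.length - (P.length - i) = i := by omega
    rw [h2] at h1
    calc T.dist (P.getVert i) y = T.dist y (P.getVert i) := SimpleGraph.dist_comm
      _ ≤ P.length - i := h1
  have hpos : ∀ i, i ≤ T.dist x y →
      T.dist x (P.getVert i) = i ∧ T.dist (P.getVert i) y = T.dist x y - i := by
    intro i hi
    have a1 := dist_getVert_le hconn P i
    have a2 := hgv2 i (by omega)
    have a3 : T.dist x y ≤ T.dist x (P.getVert i) + T.dist (P.getVert i) y :=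
      hconn.dist_triangle
    omega
  obtain ⟨hu1, hu2⟩ := hpos ε (by omega)
  obtain ⟨hv1, hv2⟩ := hpos (ε + (k + 1)) (by omega)
  set u := P.getVert ε with hudef
  set v := P.getVert (ε + (k + 1)) with hvdef
  have hugeo : T.dist x u + T.dist u y = T.dist x y := by omega
  have hvgeo : T.dist x v + T.dist v y = T.dist x y := by omega
  have huv : T.dist u v = k + 1 := by
    have := (tree_collinear hT hugeo hvgeo (by omega)).1
    omega
  -- images of deep points stay on the geodesic
  have deep : ∀ g : G, g ∈ S → ∀ w : V, ε ≤ T.dist x w → ε ≤ T.dist w y →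
      T.dist x w + T.dist w y = T.dist x y →
      T.dist x (g • w) + T.dist (g • w) y = T.dist x y ∧
      T.dist x w ≤ T.dist x (g • w) + ε ∧ T.dist x (g • w) ≤ T.dist x w + ε := by
    intro g hg w hw1 hw2 hw3
    obtain ⟨hgx, hgy⟩ := hg
    have i1 : T.dist (g • x) (g • w) = T.dist x w := hiso g x w
    have i2 : T.dist (g • w) (g • y) = T.dist w y := hiso g w y
    have i3 : T.dist (g • x) (g • y) = T.dist x y := hiso g x y
    have i4 : T.dist (g • y) (g • w) = T.dist y w := hiso g y w
    have s0 : T.dist (g • x) (g • w) + T.dist (g • w) (g • y) = T.dist (g • x) (g • y) := by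
      omega
    have hc1 : T.dist (g • x) x ≤ T.dist (g • x) (g • w) := by omega
    have s1 : T.dist x (g • w) + T.dist (g • w) (g • y) = T.dist x (g • y) :=
      tree_between hT s0 hc1
    have s1h : T.dist (g • y) (g • w) + T.dist (g • w) x = T.dist (g • y) x := by
      have c1 : T.dist (g • y) (g • w) = T.dist (g • w) (g • y) := SimpleGraph.dist_comm
      have c2 : T.dist (g • w) x = T.dist x (g • w) := SimpleGraph.dist_comm
      have c3 : T.dist (g • y) x = T.dist x (g • y) := SimpleGraph.dist_comm
      omega
    have hyw : T.dist y w = T.dist w y := SimpleGraph.dist_comm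
    have hc2 : T.dist (g • y) y ≤ T.dist (g • y) (g • w) := by omega
    have s2 : T.dist y (g • w) + T.dist (g • w) x = T.dist y x :=
      tree_between hT s1h hc2
    have c4 : T.dist y (g • w) = T.dist (g • w) y := SimpleGraph.dist_comm
    have c5 : T.dist (g • w) x = T.dist x (g • w) := SimpleGraph.dist_comm
    have c6 : T.dist y x = T.dist x y := SimpleGraph.dist_comm
    have t1 : T.dist (g • x) (g • w) ≤ T.dist (g • x) x + T.dist x (g • w) :=
      hconn.dist_triangle
    have t2 : T.dist x (g • w) ≤ T.dist x (g • x) + T.dist (g • x) (g • w) :=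
      hconn.dist_triangle
    have c7 : T.dist x (g • x) = T.dist (g • x) x := SimpleGraph.dist_comm
    exact ⟨by omega, by omega, by omega⟩
  -- key facts about images of u and v
  have himg : ∀ g ∈ S,
      (T.dist x (g • u) + T.dist (g • u) y = T.dist x y) ∧
      (T.dist x (g • v) + T.dist (g • v) y = T.dist x y) ∧
      T.dist x (g • u) ≤ 2 * ε ∧
      (T.dist x (g • v) = T.dist x (g • u) + (k + 1) ∨
        T.dist x (g • u) = T.dist x (g • v) + (k + 1)) := by
    intro g hg
    obtain ⟨du1, du2, du3⟩ := deep g hg u (by omega) (by omega) hugeo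
    obtain ⟨dv1, dv2, dv3⟩ := deep g hg v (by omega) (by omega) hvgeo
    have huvg : T.dist (g • u) (g • v) = k + 1 := by rw [hiso]; exact huv
    refine ⟨du1, dv1, by omega, ?_⟩
    rcases le_or_gt (T.dist x (g • u)) (T.dist x (g • v)) with hcase | hcase
    · left
      have := (tree_collinear hT du1 dv1 hcase).1
      omega
    · right
      have := (tree_collinear hT dv1 du1 (le_of_lt hcase)).1
      have hcc : T.dist (g • v) (g • u) = T.dist (g • u) (g • v) := SimpleGraph.dist_comm
      omega
  -- the coding map
  set f : G → ℕ := fun g =>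
    if T.dist x (g • v) = T.dist x (g • u) + (k + 1) then T.dist x (g • u)
    else 2 * ε + 1 + T.dist x (g • v) with hfdef
  have hmaps : ∀ g ∈ S, f g ∈ Finset.range (4 * ε + 1) := by
    intro g hg
    obtain ⟨e1, e2, hp2, hdich⟩ := himg g hg
    simp only [hfdef, Finset.mem_range]
    split_ifs with hif
    · omega
    · rcases hdich with h | h
      · exact absurd h hif
      · omega
  have hinj : Set.InjOn f S := by
    intro g hg h hh hfe
    obtain ⟨eg1, eg2, hpg, hdg⟩ := himg g hg
    obtain ⟨eh1, eh2, hph, hdh⟩ := himg h hh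
    have hpq : T.dist x (g • u) = T.dist x (h • u) ∧
        T.dist x (g • v) = T.dist x (h • v) := by
      simp only [hfdef] at hfe
      split_ifs at hfe with h1 h2 h2
      · exact ⟨hfe, by omega⟩
      · omega
      · omega
      · rcases hdg with hdg | hdg
        · exact absurd hdg h1
        · rcases hdh with hdh | hdh
          · exact absurd hdh h2
          · omega
    have hueq : g • u = h • u := tree_eq_of_dist hT eg1 eh1 hpq.1
    have hveq : g • v = h • v := tree_eq_of_dist hT eg2 eh2 hpq.2
    by_contra hne
    have hgh : g⁻¹ * h ≠ 1 := fun h1 => hne (inv_mul_eq_one.mp h1)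
    have hfixu : (g⁻¹ * h) • u = u := by
      rw [mul_smul, ← hueq, inv_smul_smul]
    have hfixv : (g⁻¹ * h) • v = v := by
      rw [mul_smul, ← hveq, inv_smul_smul]
    have := hacyl (g⁻¹ * h) hgh u v hfixu hfixv
    omega
  have himsub : f '' S ⊆ ↑(Finset.range (4 * ε + 1)) := by
    rintro _ ⟨g, hg, rfl⟩
    exact hmaps g hg
  have hfin : S.Finite :=
    Set.Finite.of_finite_image
      (Set.Finite.subset (Finset.range (4 * ε + 1)).finite_toSet himsub) hinj
  refine ⟨hfin, ?_⟩
  have h1 : S.ncard = (f '' S).ncard := (Set.ncard_image_of_injOn hinj).symm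
  have h2 : (f '' S).ncard ≤ (Finset.range (4 * ε + 1)).card := by
    rw [← Set.ncard_coe_finset]
    exact Set.ncard_le_ncard himsub (Finset.finite_toSet _)
  rw [Finset.card_range] at h2
  omega
end

section
/- Let k ∈ ℕ and let a group G act on a simplicial tree T by graph automorphisms, without inversions (no element of G swaps a pair of adjacent vertices) and k-acylindrically in the sense of Sela. Suppose G contains a hyperbolic element. Then every finite normal subgroup of G is trivial. -/
namespace Stmt10Aux
open SimpleGraph Walk
variable {V : Type*} [DecidableEq V] {T : SimpleGraph V}

noncomputable def geo (hT : T.IsTree) (a b : V) : T.Walk a b :=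
  (Classical.choice (hT.isConnected.preconnected a b)).bypass
lemma geo_isPath (hT : T.IsTree) (a b : V) : (geo hT a b).IsPath := Walk.bypass_isPath _
lemma geo_unique (hT : T.IsTree) {a b : V} (w : T.Walk a b) (hw : w.IsPath) :
    w = geo hT a b := (hT.existsUnique_path a b).unique hw (geo_isPath hT a b)
lemma path_length_eq_dist (hT : T.IsTree) {a b : V} (w : T.Walk a b) (hw : w.IsPath) :
    w.length = T.dist a b := by
  obtain ⟨p, hp⟩ := hT.isConnected.exists_walk_length_eq_dist a b
  have h1 : p.bypass.length ≤ p.length := Walk.length_bypass_le _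
  have h2 : T.dist a b ≤ p.bypass.length := dist_le _
  have hlen : p.bypass.length = T.dist a b := le_antisymm (by omega) h2
  rw [geo_unique hT w hw, ← geo_unique hT p.bypass (Walk.bypass_isPath p), hlen]
lemma between_of_mem (hT : T.IsTree) {a b v : V} (w : T.Walk a b) (hw : w.IsPath)
    (hv : v ∈ w.support) : T.dist a v + T.dist v b = T.dist a b := by
  have h1 := path_length_eq_dist hT (w.takeUntil v hv) (hw.takeUntil hv)
  have h2 := path_length_eq_dist hT (w.dropUntil v hv) (hw.dropUntil hv)
  have h3 := path_length_eq_dist hT w hw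
  have h4 := congrArg Walk.length (w.take_spec hv)
  rw [Walk.length_append] at h4
  omega

lemma exists_median (hT : T.IsTree) (a b c : V) : ∃ m : V,
    T.dist a b = T.dist a m + T.dist m b ∧
    T.dist b c = T.dist b m + T.dist m c ∧
    T.dist a c = T.dist a m + T.dist m c ∧
    (∀ w : T.Walk b a, w.IsPath → m ∈ w.support) ∧
    (∀ w : T.Walk b c, w.IsPath → m ∈ w.support) ∧
    (∀ w : T.Walk a c, w.IsPath → m ∈ w.support) := by
  classical
  set P := geo hT b a with hP
  set Q := geo hT b c with hQ
  have hPp : P.IsPath := geo_isPath hT b a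
  have hQp : Q.IsPath := geo_isPath hT b c
  set common := P.support.filter (fun v => v ∈ Q.support) with hcommon
  have hbc : b ∈ common := by
    rw [hcommon, List.mem_filter]
    exact ⟨P.start_mem_support, by simpa using Q.start_mem_support⟩
  have hcne : common ≠ [] := List.ne_nil_of_mem hbc
  set m := common.getLast hcne with hm
  have hmcommon : m ∈ common := List.getLast_mem hcne
  have hmP : m ∈ P.support := (List.mem_filter.1 hmcommon).1
  have hmQ : m ∈ Q.support := by
    have := (List.mem_filter.1 hmcommon).2; simpa using this
  have hPsplit : P.support = (P.takeUntil m hmP).support ++ (P.dropUntil m hmP).support.tail := by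
    conv_lhs => rw [← P.take_spec hmP]
    exact Walk.support_append _ _
  have hnodupP : P.support.Nodup := hPp.support_nodup
  -- no vertex strictly after m on P lies on Q
  have hclaim : ∀ v ∈ (P.dropUntil m hmP).support.tail, v ∉ Q.support := by
    intro v hv hvQ
    have hfilne : ((P.dropUntil m hmP).support.tail.filter (fun v => v ∈ Q.support)) ≠ [] := by
      apply List.ne_nil_of_mem (a := v)
      rw [List.mem_filter]; exact ⟨hv, by simpa using hvQ⟩
    have hcsplit : common = ((P.takeUntil m hmP).support.filter (fun v => v ∈ Q.support))
        ++ ((P.dropUntil m hmP).support.tail.filter (fun v => v ∈ Q.support)) := by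
      rw [hcommon, hPsplit, List.filter_append]
    have hmtail : m ∈ (P.dropUntil m hmP).support.tail := by
      set c2 := (P.dropUntil m hmP).support.tail.filter (fun v => v ∈ Q.support) with hc2
      have h1 : common.getLast? = some m := by
        rw [hm]; exact List.getLast?_eq_getLast_of_ne_nil hcne
      have h2 : common.getLast? = c2.getLast? := by
        rw [hcsplit]; exact List.getLast?_append_of_ne_nil _ hfilne
      have h3 : c2.getLast? = some (c2.getLast hfilne) :=
        List.getLast?_eq_getLast_of_ne_nil hfilne
      have h4 : m = c2.getLast hfilne := by
        have := h1.symm.trans (h2.trans h3)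
        exact Option.some.inj this
      have : m ∈ c2 := h4 ▸ List.getLast_mem hfilne
      exact (List.mem_filter.1 this).1
    have hdisj := List.disjoint_of_nodup_append (hPsplit ▸ hnodupP)
    exact hdisj (Walk.end_mem_support (P.takeUntil m hmP)) hmtail
  -- the concatenated walk through m
  set W := ((P.dropUntil m hmP).reverse.append (Q.dropUntil m hmQ)) with hW
  have hWp : W.IsPath := by
    rw [Walk.isPath_def, hW, Walk.support_append, List.nodup_append]
    refine ⟨by simpa [Walk.support_reverse] using ((hPp.dropUntil hmP).reverse).support_nodup, ?_, ?_⟩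
    · have : (Q.dropUntil m hmQ).support.Nodup := (hQp.dropUntil hmQ).support_nodup
      exact this.tail
    · intro v hv1 w hv2 hvw; subst hvw
      have hvP : v ∈ (P.dropUntil m hmP).support := by
        rwa [Walk.support_reverse, List.mem_reverse] at hv1
      have hvQ : v ∈ Q.support :=
        Walk.support_dropUntil_subset Q hmQ (List.mem_of_mem_tail hv2)
      have hvne : v ≠ m := by
        have hnd : (Q.dropUntil m hmQ).support.Nodup := (hQp.dropUntil hmQ).support_nodup
        have hcons := (Q.dropUntil m hmQ).support_eq_cons
        intro h; subst h
        rw [hcons] at hnd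
        exact (List.nodup_cons.1 hnd).1 hv2
      have hvtail : v ∈ (P.dropUntil m hmP).support.tail := by
        have hcons := (P.dropUntil m hmP).support_eq_cons
        rw [hcons, List.mem_cons] at hvP
        rcases hvP with h | h
        · exact absurd h hvne
        · exact h
      exact hclaim v hvtail hvQ
  -- lengths
  have lTP := path_length_eq_dist hT _ (hPp.takeUntil hmP)
  have lDP := path_length_eq_dist hT _ (hPp.dropUntil hmP)
  have lP := path_length_eq_dist hT P hPp
  have hsP := congrArg Walk.length (P.take_spec hmP)
  rw [Walk.length_append] at hsP
  have lTQ := path_length_eq_dist hT _ (hQp.takeUntil hmQ)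
  have lDQ := path_length_eq_dist hT _ (hQp.dropUntil hmQ)
  have lQ := path_length_eq_dist hT Q hQp
  have hsQ := congrArg Walk.length (Q.take_spec hmQ)
  rw [Walk.length_append] at hsQ
  have lW := path_length_eq_dist hT W hWp
  have hWlen : W.length = (P.dropUntil m hmP).length + (Q.dropUntil m hmQ).length := by
    rw [hW, Walk.length_append, Walk.length_reverse]
  have cab : T.dist a b = T.dist b a := SimpleGraph.dist_comm ..
  have cam : T.dist a m = T.dist m a := SimpleGraph.dist_comm ..
  have cbm : T.dist b m = T.dist m b := SimpleGraph.dist_comm ..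
  refine ⟨m, by omega, by omega, by omega, ?_, ?_, ?_⟩
  · intro w hw; rw [geo_unique hT w hw]; exact hmP
  · intro w hw; rw [geo_unique hT w hw]; exact hmQ
  · intro w hw
    rw [geo_unique hT w hw, ← geo_unique hT W hWp, hW]
    rw [Walk.mem_support_append_iff]
    exact Or.inl (Walk.end_mem_support _)


lemma collinear (hT : T.IsTree) {a b u v : V} (w : T.Walk a b) (hw : w.IsPath)
    (hu : u ∈ w.support) (hv : v ∈ w.support) :
    T.dist a u + T.dist u v = T.dist a v ∨ T.dist a v + T.dist v u = T.dist a u := by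
  have hsplit : v ∈ (w.takeUntil u hu).support ∨ v ∈ (w.dropUntil u hu).support := by
    rw [← Walk.mem_support_append_iff, w.take_spec hu]; exact hv
  cases hsplit with
  | inl h => exact Or.inr (between_of_mem hT _ (hw.takeUntil hu) h)
  | inr h =>
    left
    have e1 := between_of_mem hT w hw hu
    have e2 := between_of_mem hT w hw hv
    have e3 := between_of_mem hT _ (hw.dropUntil hu) h
    omega

lemma mem_path_of_between (hT : T.IsTree) {a b v : V}
    (h : T.dist a v + T.dist v b = T.dist a b) {w : T.Walk a b} (hw : w.IsPath) :
    v ∈ w.support := by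
  obtain ⟨m, e1, e2, e3, _, _, hmem⟩ := exists_median hT a v b
  have c1 : T.dist v m = T.dist m v := SimpleGraph.dist_comm ..
  have h0 : T.dist m v = 0 := by omega
  have hmv : m = v := hT.isConnected.dist_eq_zero_iff.mp h0
  exact hmv ▸ hmem w hw

lemma between_trans (hT : T.IsTree) {a b' b c : V}
    (h1 : T.dist a b' + T.dist b' b = T.dist a b)
    (h2 : T.dist b' b + T.dist b c = T.dist b' c)
    (hne : b' ≠ b) :
    T.dist a c = T.dist a b + T.dist b c := by
  obtain ⟨m, e1, e2, e3, hma, _, _⟩ := exists_median hT a b c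
  have hb' : b' ∈ (geo hT b a).support := by
    have := mem_path_of_between hT h1 ((geo_isPath hT b a).reverse)
    simpa [Walk.support_reverse] using this
  have hm : m ∈ (geo hT b a).support := hma _ (geo_isPath hT b a)
  have hcol := collinear hT (geo hT b a) (geo_isPath hT b a) hm hb'
  have htri := hT.isConnected.dist_triangle (u := b') (v := m) (w := c)
  have hpos : 0 < T.dist b' b := hT.isConnected.pos_dist_of_ne hne
  have c1 : T.dist b m = T.dist m b := SimpleGraph.dist_comm ..
  have c2 : T.dist b b' = T.dist b' b := SimpleGraph.dist_comm ..
  have c3 : T.dist m b' = T.dist b' m := SimpleGraph.dist_comm ..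
  have h0 : T.dist b m = 0 := by rcases hcol with h | h <;> omega
  have hmb : b = m := hT.isConnected.dist_eq_zero_iff.mp (c1 ▸ h0)
  rw [e3, ← hmb]


section action
variable {G : Type*} [Group G] [MulAction G V]

/-- the action of `g` as a graph homomorphism -/
def autHom (haut : ∀ (g : G) (a b : V), T.Adj (g • a) (g • b) ↔ T.Adj a b) (g : G) :
    T →g T :=
  ⟨fun v => g • v, fun {a b} hab => (haut g a b).mpr hab⟩

@[simp] lemma autHom_apply (haut : ∀ (g : G) (a b : V), T.Adj (g • a) (g • b) ↔ T.Adj a b)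
    (g : G) (v : V) : autHom haut g v = g • v := rfl

lemma getVert_map {W : Type*} {H : SimpleGraph V} {H' : SimpleGraph W} (φ : H →g H')
    {a b : V} (p : H.Walk a b) (i : ℕ) : (p.map φ).getVert i = φ (p.getVert i) := by
  induction p generalizing i with
  | nil => simp [Walk.getVert]
  | cons h q ih =>
    cases i with
    | zero => simp
    | succ n => simpa using ih n

lemma smul_dist_le (hT : T.IsTree)
    (haut : ∀ (g : G) (a b : V), T.Adj (g • a) (g • b) ↔ T.Adj a b) (g : G) (a b : V) : T.dist (g • a) (g • b) ≤ T.dist a b := by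
  obtain ⟨p, hp⟩ := hT.isConnected.exists_walk_length_eq_dist a b
  calc T.dist (g • a) (g • b) ≤ (p.map (autHom haut g)).length := SimpleGraph.dist_le _
    _ = p.length := Walk.length_map _ _
    _ = T.dist a b := hp

lemma smul_dist (hT : T.IsTree)
    (haut : ∀ (g : G) (a b : V), T.Adj (g • a) (g • b) ↔ T.Adj a b) (g : G) (a b : V) : T.dist (g • a) (g • b) = T.dist a b := by
  refine le_antisymm (smul_dist_le hT haut g a b) ?_
  have := smul_dist_le hT haut g⁻¹ (g • a) (g • b)
  simpa using this

/-- The core translation-length lemma: an element acting without a fixed vertex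
translates some vertex along an axis. -/
lemma core (hT : T.IsTree)
    (haut : ∀ (g : G) (a b : V), T.Adj (g • a) (g • b) ↔ T.Adj a b)
    (hnoinv : ∀ (g : G) (a b : V), T.Adj a b → ¬ (g • a = b ∧ g • b = a))
    (f : G) (hf : ∀ v : V, f • v ≠ v) :
    ∃ (y : V) (ℓ : ℕ), 1 ≤ ℓ ∧ ∀ n : ℕ, T.dist y ((f ^ n) • y) = n * ℓ := by
  have hconn := hT.isConnected
  have hV : Nonempty V := hconn.nonempty
  set S := Set.range (fun v : V => T.dist v (f • v)) with hS
  have hSne : S.Nonempty := Set.range_nonempty _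
  obtain ⟨y, hy⟩ : ∃ y : V, T.dist y (f • y) = sInf S := Nat.sInf_mem hSne
  set ℓ := sInf S with hℓ
  have hmin : ∀ v : V, ℓ ≤ T.dist v (f • v) := fun v => Nat.sInf_le ⟨v, rfl⟩
  have hℓpos : 1 ≤ ℓ := by
    rcases Nat.eq_zero_or_pos ℓ with h0 | h; swap
    · exact h
    · exfalso
      rw [h0] at hy
      exact hf y (hconn.dist_eq_zero_iff.mp hy).symm
  -- step A : two-step displacement
  have hA : T.dist y (f • (f • y)) = 2 * ℓ := by
    obtain ⟨m, e1, e2, e3, hmba, hmbc, _⟩ := exists_median hT y (f • y) (f • (f • y))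
    have hd2 : T.dist (f • y) (f • (f • y)) = ℓ := by
      rw [smul_dist hT haut f]; exact hy
    -- m lies on the image of the geodesic, so f⁻¹ • m lies on the geodesic
    have hmapP : ((geo hT y (f • y)).map (autHom haut f)).IsPath :=
      Walk.map_isPath_of_injective (MulAction.injective f) (geo_isPath hT y (f • y))
    have hmQ : m ∈ ((geo hT y (f • y)).map (autHom haut f)).support := hmbc _ hmapP
    have hm' : f⁻¹ • m ∈ (geo hT y (f • y)).support := by
      rw [Walk.support_map, List.mem_map] at hmQ
      obtain ⟨u, hu, hum⟩ := hmQ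
      have : f⁻¹ • m = u := by rw [← hum]; simp
      rwa [this]
    have hmP : m ∈ (geo hT y (f • y)).support := by
      have := hmba ((geo hT y (f • y)).reverse) ((geo_isPath hT y (f • y)).reverse)
      simpa [Walk.support_reverse] using this
    have hcol := collinear hT (geo hT y (f • y)) (geo_isPath hT y (f • y)) hmP hm'
    have hd3 : T.dist y (f⁻¹ • m) = T.dist (f • y) m := by
      have := smul_dist hT haut f⁻¹ (f • y) m
      simpa using this
    have hdisp : ℓ ≤ T.dist (f⁻¹ • m) m := by
      have := hmin (f⁻¹ • m); rwa [smul_inv_smul] at this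
    have c1 : T.dist (f • y) m = T.dist m (f • y) := SimpleGraph.dist_comm ..
    have c2 : T.dist m (f⁻¹ • m) = T.dist (f⁻¹ • m) m := SimpleGraph.dist_comm ..
    have hy' : T.dist y (f • y) = ℓ := hy
    -- either the median is at f • y (good) or the two-step distance vanishes
    have hDD : T.dist y (f • (f • y)) = 2 * ℓ ∨ T.dist y (f • (f • y)) = 0 := by
      rcases hcol with h | h
      · right; omega
      · left; omega
    rcases hDD with h | h
    · exact h
    · -- inversion case : f • (f • y) = y
      exfalso
      have h2 : f • (f • y) = y := hconn.dist_eq_zero_iff.mp (SimpleGraph.dist_comm .. ▸ h)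
      set P0 := geo hT y (f • y) with hP0
      have hlen0 : P0.length = ℓ := by
        rw [path_length_eq_dist hT P0 (geo_isPath hT y (f • y)), hy']
      set P1 := ((P0.map (autHom haut f)).copy (autHom_apply haut f y) ((autHom_apply haut f (f • y)).trans h2) : T.Walk (f • y) y) with hP1
      have hP1p : P1.IsPath := by
        rw [hP1, Walk.isPath_copy]
        exact Walk.map_isPath_of_injective (MulAction.injective f) (geo_isPath hT y (f • y))
      have hEq : P1.reverse = P0 := geo_unique hT P1.reverse hP1p.reverse
      have hlen1 : P1.length = ℓ := by
        rw [hP1, Walk.length_copy, Walk.length_map, hlen0]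
      have key : ∀ i : ℕ, P0.getVert i = f • (P0.getVert (ℓ - i)) := by
        intro i
        conv_lhs => rw [← hEq]
        rw [Walk.getVert_reverse, hlen1, hP1, Walk.getVert_copy, getVert_map]
        rfl
      rcases Nat.even_or_odd ℓ with ⟨s, hs⟩ | ⟨s, hs⟩
      · have := key s
        rw [show ℓ - s = s by omega] at this
        exact hf (P0.getVert s) this.symm
      · have hadj : T.Adj (P0.getVert s) (P0.getVert (s + 1)) :=
          P0.adj_getVert_succ (by omega)
        have k1 := key (s + 1)
        have k2 := key s
        rw [show ℓ - (s + 1) = s by omega] at k1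
        rw [show ℓ - s = s + 1 by omega] at k2
        exact hnoinv f _ _ hadj ⟨k1.symm, k2.symm⟩
  -- step B : full induction
  have hy1 : T.dist y ((f ^ 1) • y) = 1 * ℓ := by simpa using hy
  have hB : ∀ n : ℕ, T.dist y ((f ^ n) • y) = n * ℓ := by
    intro n
    induction n using Nat.strong_induction_on with
    | _ n ih =>
      match n with
      | 0 => simp
      | 1 => exact hy1
      | (n + 2) =>
        have ihn := ih n (by omega)
        have ihn1 := ih (n + 1) (by omega)
        have hd1 : T.dist ((f ^ n) • y) ((f ^ (n + 1)) • y) = ℓ := by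
          have : (f ^ (n + 1)) • y = (f ^ n) • (f • y) := by
            rw [pow_succ, mul_smul]
          rw [this, smul_dist hT haut (f ^ n) y (f • y), hy]
        have hd2 : T.dist ((f ^ (n + 1)) • y) ((f ^ (n + 2)) • y) = ℓ := by
          have : (f ^ (n + 2)) • y = (f ^ (n + 1)) • (f • y) := by
            rw [pow_succ, mul_smul]
          rw [this, smul_dist hT haut (f ^ (n + 1)) y (f • y), hy]
        have hd3 : T.dist ((f ^ n) • y) ((f ^ (n + 2)) • y) = 2 * ℓ := by
          have : (f ^ (n + 2)) • y = (f ^ n) • (f • (f • y)) := by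
            rw [show n + 2 = n + 1 + 1 by rfl, pow_succ, pow_succ, mul_smul, mul_smul]
          rw [this, smul_dist hT haut (f ^ n) y (f • (f • y)), hA]
        have hne : (f ^ n) • y ≠ (f ^ (n + 1)) • y := by
          intro h
          rw [h] at hd1
          rw [SimpleGraph.dist_self] at hd1
          omega
        have hexp : (n + 1) * ℓ = n * ℓ + ℓ := by ring
        have := between_trans hT (a := y) (b' := (f ^ n) • y) (b := (f ^ (n + 1)) • y)
          (c := (f ^ (n + 2)) • y) (by omega) (by omega) hne
        rw [this, ihn1, hd2]
        ring
  exact ⟨y, ℓ, hℓpos, hB⟩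


end action

end Stmt10Aux

open Stmt10Aux in
/-- for a `k`-acylindrical (in the sense of Sela) action without inversions
on a tree, if `G` contains a hyperbolic element then every finite normal subgroup of `G`
is trivial. -/
theorem stmt_10 {V G : Type*} [Group G] [MulAction G V] (T : SimpleGraph V)
    (hT : T.IsTree)
    (haut : ∀ (g : G) (a b : V), T.Adj (g • a) (g • b) ↔ T.Adj a b)
    (k : ℕ)
    (hnoinv : ∀ (g : G) (a b : V), T.Adj a b → ¬ (g • a = b ∧ g • b = a))
    (hacyl : ∀ g : G, g ≠ 1 → ∀ a b : V, g • a = a → g • b = b → T.dist a b ≤ k)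
    (hhyp : ∃ h : G, ¬ ∃ w : V, h • w = w) :
    ∀ N : Subgroup G, N.Normal → (N : Set G).Finite → N = ⊥ := by
  classical
  intro N hN hfin
  rw [Subgroup.eq_bot_iff_forall]
  intro g hg
  by_contra hg1
  obtain ⟨h, hh⟩ := hhyp
  have hhfix : ∀ v : V, h • v ≠ v := fun v hv => hh ⟨v, hv⟩
  -- pigeonhole on conjugates of g by powers of h
  have hmem : ∀ n : ℕ, h ^ n * g * (h ^ n)⁻¹ ∈ N := fun n => hN.conj_mem g hg (h ^ n)
  have hnotinj : ¬ Function.Injective (fun n : ℕ => h ^ n * g * (h ^ n)⁻¹) := by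
    intro hinj
    exact (Set.infinite_of_injective_forall_mem hinj hmem) hfin
  rw [Function.not_injective_iff] at hnotinj
  obtain ⟨i, j, hij, hne⟩ := hnotinj
  obtain ⟨s, t, hst, hlt⟩ : ∃ s t : ℕ,
      h ^ s * g * (h ^ s)⁻¹ = h ^ t * g * (h ^ t)⁻¹ ∧ s < t := by
    rcases lt_or_gt_of_ne hne with h' | h'
    · exact ⟨i, j, hij, h'⟩
    · exact ⟨j, i, hij.symm, h'⟩
  set g' := h ^ s * g * (h ^ s)⁻¹ with hg'def
  have hg'N : g' ∈ N := hmem s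
  have hg'1 : g' ≠ 1 := by
    intro e
    apply hg1
    have : g = (h ^ s)⁻¹ * (h ^ s * g * (h ^ s)⁻¹) * h ^ s := by group
    rw [← hg'def, e] at this
    simpa using this
  set p := t - s with hp
  have hppos : 0 < p := by omega
  have hcomm : h ^ p * g' = g' * h ^ p := by
    have ht : h ^ t = h ^ p * h ^ s := by rw [← pow_add]; congr 1; omega
    have hconj : g' = h ^ p * g' * (h ^ p)⁻¹ := by
      calc g' = h ^ t * g * (h ^ t)⁻¹ := hst
        _ = h ^ p * (h ^ s * g * (h ^ s)⁻¹) * (h ^ p)⁻¹ := by rw [ht]; group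
        _ = h ^ p * g' * (h ^ p)⁻¹ := by rw [← hg'def]
    calc h ^ p * g' = (h ^ p * g' * (h ^ p)⁻¹) * h ^ p := by group
      _ = g' * h ^ p := by rw [← hconj]
  set f := h ^ p with hfdef
  -- f has no fixed vertex
  obtain ⟨yh, ℓh, hℓh, hBh⟩ := core hT haut hnoinv h hhfix
  have hffix : ∀ v : V, f • v ≠ v := by
    intro v hv
    have hmfix : ∀ m : ℕ, (f ^ m) • v = v := by
      intro m
      induction m with
      | zero => simp
      | succ n ih => rw [pow_succ, mul_smul, hv, ih]
    have key : ∀ m : ℕ, (p * m) * ℓh ≤ 2 * T.dist yh v := by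
      intro m
      have h1 : (h ^ (p * m)) • v = v := by
        rw [pow_mul, ← hfdef]; exact hmfix m
      have h2 := hBh (p * m)
      have htri1 := hT.isConnected.dist_triangle (u := yh) (v := v) (w := (h ^ (p * m)) • yh)
      have h6 : T.dist v ((h ^ (p * m)) • yh) = T.dist v yh := by
        conv_lhs => rw [← h1]
        exact smul_dist hT haut _ v yh
      have h4 : T.dist v yh = T.dist yh v := SimpleGraph.dist_comm ..
      omega
    have key2 := key (2 * T.dist yh v + 1)
    have e1 : 2 * T.dist yh v + 1 ≤ p * (2 * T.dist yh v + 1) :=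
      Nat.le_mul_of_pos_left _ hppos
    have e2 : p * (2 * T.dist yh v + 1) ≤ (p * (2 * T.dist yh v + 1)) * ℓh :=
      Nat.le_mul_of_pos_right _ hℓh
    omega
  obtain ⟨yf, ℓf, hℓf, hBf⟩ := core hT haut hnoinv f hffix
  -- g' is elliptic
  have hgell : ∃ x : V, g' • x = x := by
    by_contra hno
    push_neg at hno
    obtain ⟨yg, ℓg, hℓg, hBg⟩ := core hT haut hnoinv g' hno
    have hmem2 : ∀ n : ℕ, g' ^ n ∈ N := fun n => pow_mem hg'N n
    have hnotinj2 : ¬ Function.Injective (fun n : ℕ => g' ^ n) := by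
      intro hinj
      exact (Set.infinite_of_injective_forall_mem hinj hmem2) hfin
    rw [Function.not_injective_iff] at hnotinj2
    obtain ⟨i2, j2, hij2, hne2⟩ := hnotinj2
    obtain ⟨s2, t2, hst2, hlt2⟩ : ∃ s t : ℕ, g' ^ s = g' ^ t ∧ s < t := by
      rcases lt_or_gt_of_ne hne2 with h' | h'
      · exact ⟨i2, j2, hij2, h'⟩
      · exact ⟨j2, i2, hij2.symm, h'⟩
    have hone : g' ^ (t2 - s2) = 1 := by
      have e : g' ^ (t2 - s2) * g' ^ s2 = g' ^ t2 := by
        rw [← pow_add]; congr 1; omega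
      rw [← hst2] at e
      have := mul_right_cancel (b := g' ^ s2) (a := g' ^ (t2 - s2)) (c := 1)
        (by rw [e, one_mul])
      exact this
    have := hBg (t2 - s2)
    rw [hone, one_smul, SimpleGraph.dist_self] at this
    have hpos2 : 0 < (t2 - s2) * ℓg := Nat.mul_pos (by omega) hℓg
    omega
  obtain ⟨x, hx⟩ := hgell
  -- g' fixes the orbit of x under f
  have hfixn : ∀ n : ℕ, g' • ((f ^ n) • x) = (f ^ n) • x := by
    intro n
    have hcn : g' * f ^ n = f ^ n * g' := (Commute.pow_left hcomm n).symm
    calc g' • ((f ^ n) • x) = (g' * f ^ n) • x := (mul_smul _ _ _).symm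
      _ = (f ^ n * g') • x := by rw [hcn]
      _ = (f ^ n) • (g' • x) := mul_smul _ _ _
      _ = (f ^ n) • x := by rw [hx]
  -- acylindricity bounds the orbit of x, contradicting hyperbolicity of f
  have hk : ∀ n : ℕ, T.dist x ((f ^ n) • x) ≤ k :=
    fun n => hacyl g' hg'1 x _ hx (hfixn n)
  set d := T.dist yf x with hd
  set n := 2 * d + k + 1 with hn
  have hb := hBf n
  have htri1 := hT.isConnected.dist_triangle (u := yf) (v := x) (w := (f ^ n) • yf)
  have htri2 := hT.isConnected.dist_triangle (u := x) (v := (f ^ n) • x) (w := (f ^ n) • yf)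
  have h3 : T.dist ((f ^ n) • x) ((f ^ n) • yf) = T.dist x yf := smul_dist hT haut _ x yf
  have h4 : T.dist x yf = d := SimpleGraph.dist_comm ..
  have h5 := hk n
  have e1 : n ≤ n * ℓf := Nat.le_mul_of_pos_right _ hℓf
  omega
end

section
/- Let a group G act on a simplicial tree T by graph automorphisms, let h ∈ G be a hyperbolic element and let L be the axis of h. Suppose there exist vertices x, y ∈ L such that pst_G(L) = pst_G([x,y]). Then there exists M > 0 such that for all vertices z, w ∈ L with d(z,w) ≥ M one has pst_G([z,w]) = pst_G(L). -/
/-- The pointwise stabilizer of a set of vertices. -/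
def pstSet {G V : Type*} [Group G] [MulAction G V] (S : Set V) : Set G :=
  {g : G | ∀ s ∈ S, g • s = s}

/-- The geodesic segment between two vertices of a tree. -/
def seg {V : Type*} (T : SimpleGraph V) (x y : V) : Set V :=
  {p : V | T.dist x p + T.dist p y = T.dist x y}

/-- The axis of an element: vertices moved exactly the translation length. -/
def axisSet {G V : Type*} [Group G] [MulAction G V] (T : SimpleGraph V) (h : G) : Set V :=
  {w : V | T.dist w (h • w) = sInf (Set.range fun u : V => T.dist u (h • u))}

namespace St11

variable {V : Type*} {T : SimpleGraph V}

lemma mem_seg {a b p : V} : p ∈ seg T a b ↔ T.dist a p + T.dist p b = T.dist a b := Iff.rfl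

lemma seg_comm (a b : V) : seg T a b = seg T b a := by
  ext p
  simp only [mem_seg]
  have h1 : T.dist a p = T.dist p a := SimpleGraph.dist_comm
  have h2 : T.dist p b = T.dist b p := SimpleGraph.dist_comm
  have h3 : T.dist a b = T.dist b a := SimpleGraph.dist_comm
  omega

lemma left_mem_seg (a b : V) : a ∈ seg T a b := by simp [mem_seg]

lemma right_mem_seg (a b : V) : b ∈ seg T a b := by simp [mem_seg]

variable (hT : T.IsTree)
include hT

lemma path_length_eq {a b : V} (P : T.Walk a b) (hP : P.IsPath) : P.length = T.dist a b := by
  obtain ⟨W, hW⟩ := hT.isConnected.exists_walk_length_eq_dist a b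
  have hWp : W.IsPath := W.isPath_of_length_eq_dist hW
  have h2 : (⟨P, hP⟩ : T.Path a b) = ⟨W, hWp⟩ := hT.IsAcyclic.path_unique _ _
  have h3 := congrArg (fun q : T.Path a b => q.1.length) h2
  simpa [hW] using h3

lemma mem_walk_support_iff_mem_seg {a b : V} (W : T.Walk a b) (hW : W.length = T.dist a b)
    (p : V) : p ∈ W.support ↔ p ∈ seg T a b := by
  classical
  constructor
  · intro hp
    have hsplit := congrArg SimpleGraph.Walk.length (W.take_spec hp)
    rw [SimpleGraph.Walk.length_append] at hsplit
    have h1 : T.dist a p ≤ (W.takeUntil p hp).length := T.dist_le _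
    have h2 : T.dist p b ≤ (W.dropUntil p hp).length := T.dist_le _
    have h3 : T.dist a b ≤ T.dist a p + T.dist p b := hT.isConnected.dist_triangle
    rw [mem_seg]; omega
  · intro hp
    obtain ⟨W1, hW1⟩ := hT.isConnected.exists_walk_length_eq_dist a p
    obtain ⟨W2, hW2⟩ := hT.isConnected.exists_walk_length_eq_dist p b
    have hlen : (W1.append W2).length = T.dist a b := by
      rw [SimpleGraph.Walk.length_append, hW1, hW2]; exact hp
    have hP : (W1.append W2).IsPath := (W1.append W2).isPath_of_length_eq_dist hlen
    have hWp : W.IsPath := W.isPath_of_length_eq_dist hW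
    have h2 : (⟨W1.append W2, hP⟩ : T.Path a b) = ⟨W, hWp⟩ := hT.IsAcyclic.path_unique _ _
    have h3 := congrArg (fun q : T.Path a b => q.1.support) h2
    simp only at h3
    rw [← h3, SimpleGraph.Walk.mem_support_append_iff]
    exact Or.inl W1.end_mem_support

lemma getVert_dist_le {a b : V} (W : T.Walk a b) (k : ℕ) :
    T.dist a (W.getVert k) ≤ k ∧ T.dist (W.getVert k) b ≤ W.length - k := by
  induction W generalizing k with
  | nil =>
    constructor <;> simp [SimpleGraph.Walk.getVert, SimpleGraph.dist_self]
  | @cons a a' b hadj W ih =>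
    cases k with
    | zero =>
      refine ⟨by simp, ?_⟩
      simpa using T.dist_le (SimpleGraph.Walk.cons hadj W)
    | succ k =>
      obtain ⟨ih1, ih2⟩ := ih k
      have hd1 : T.dist a a' = 1 := SimpleGraph.dist_eq_one_iff_adj.mpr hadj
      have htri : T.dist a ((SimpleGraph.Walk.cons hadj W).getVert (k+1)) ≤
          T.dist a a' + T.dist a' (W.getVert k) := hT.isConnected.dist_triangle
      rw [SimpleGraph.Walk.getVert_cons_succ] at *
      constructor
      · omega
      · simpa using ih2

/-- P2: existence of a point at given distance on a segment. -/
lemma exists_point_on_seg {a b : V} {k : ℕ} (hk : k ≤ T.dist a b) :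
    ∃ p ∈ seg T a b, T.dist a p = k := by
  obtain ⟨W, hW⟩ := hT.isConnected.exists_walk_length_eq_dist a b
  obtain ⟨h1, h2⟩ := getVert_dist_le hT W k
  rw [hW] at h2
  have h3 : T.dist a b ≤ T.dist a (W.getVert k) + T.dist (W.getVert k) b :=
    hT.isConnected.dist_triangle
  exact ⟨W.getVert k, by rw [mem_seg]; omega, by omega⟩

/-- P1a: splitting a segment at an interior point. -/
lemma seg_split {a b q : V} (hq : q ∈ seg T a b) {p : V} (hp : p ∈ seg T a b) :
    p ∈ seg T a q ∨ p ∈ seg T q b := by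
  classical
  obtain ⟨W, hW⟩ := hT.isConnected.exists_walk_length_eq_dist a b
  have hq' := (mem_walk_support_iff_mem_seg hT W hW q).2 hq
  have hp' := (mem_walk_support_iff_mem_seg hT W hW p).2 hp
  rw [← W.take_spec hq', SimpleGraph.Walk.mem_support_append_iff] at hp'
  have hsplit := congrArg SimpleGraph.Walk.length (W.take_spec hq')
  rw [SimpleGraph.Walk.length_append] at hsplit
  have htq : (W.takeUntil q hq').length = T.dist a q := by
    have h1 : T.dist a q ≤ (W.takeUntil q hq').length := T.dist_le _
    have h2 : T.dist q b ≤ (W.dropUntil q hq').length := T.dist_le _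
    rw [mem_seg] at hq; omega
  have hdq : (W.dropUntil q hq').length = T.dist q b := by
    rw [mem_seg] at hq; omega
  rcases hp' with hp' | hp'
  · exact Or.inl ((mem_walk_support_iff_mem_seg hT _ htq p).1 hp')
  · exact Or.inr ((mem_walk_support_iff_mem_seg hT _ hdq p).1 hp')

/-- P1b: initial subsegment. -/
lemma seg_sub_left {a b q : V} (hq : q ∈ seg T a b) : seg T a q ⊆ seg T a b := by
  intro p hp
  rw [mem_seg] at *
  have h1 : T.dist p b ≤ T.dist p q + T.dist q b := hT.isConnected.dist_triangle
  have h2 : T.dist a b ≤ T.dist a p + T.dist p b := hT.isConnected.dist_triangle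
  omega

lemma seg_sub_right {a b q : V} (hq : q ∈ seg T a b) : seg T q b ⊆ seg T a b := by
  rw [seg_comm q b, seg_comm a b]
  exact seg_sub_left hT (by rwa [← seg_comm])

/-- P4: earlier point on a segment. -/
lemma mem_seg_of_dist_le {a b p q : V} (hp : p ∈ seg T a b) (hq : q ∈ seg T a b)
    (hle : T.dist a p ≤ T.dist a q) : p ∈ seg T a q := by
  rcases seg_split hT hq hp with h | h
  · exact h
  · rw [mem_seg] at *
    have h2 : T.dist a p ≤ T.dist a q + T.dist q p := hT.isConnected.dist_triangle
    have h3 : T.dist a b ≤ T.dist a p + T.dist p b := hT.isConnected.dist_triangle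
    have h4 : T.dist q p = 0 := by omega
    have h5 : q = p := (hT.isConnected.dist_eq_zero_iff).1 h4
    subst h5
    simp [mem_seg]

/-- P3: uniqueness of point at given distance. -/
lemma eq_of_mem_seg_dist_eq {a b p q : V} (hp : p ∈ seg T a b) (hq : q ∈ seg T a b)
    (hd : T.dist a p = T.dist a q) : p = q := by
  have h1 : p ∈ seg T a q := mem_seg_of_dist_le hT hp hq hd.le
  rw [mem_seg] at h1
  have : T.dist p q = 0 := by omega
  exact (hT.isConnected.dist_eq_zero_iff).1 this

/-- P5: subsegment. -/
lemma seg_sub_seg {a b p q : V} (hp : p ∈ seg T a b) (hq : q ∈ seg T a b) :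
    seg T p q ⊆ seg T a b := by
  rcases le_total (T.dist a p) (T.dist a q) with hle | hle
  · have h1 : p ∈ seg T a q := mem_seg_of_dist_le hT hp hq hle
    exact (seg_sub_right hT h1).trans (seg_sub_left hT hq)
  · have h1 : q ∈ seg T a p := mem_seg_of_dist_le hT hq hp hle
    rw [seg_comm]
    exact (seg_sub_right hT h1).trans (seg_sub_left hT hp)









/-- Concatenation of two minimal walks meeting only at the common endpoint is minimal. -/
lemma dist_add_of_disjoint {a b c : V} (W1 : T.Walk a b) (W2 : T.Walk b c)
    (h1 : W1.length = T.dist a b) (h2 : W2.length = T.dist b c)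
    (hdisj : ∀ v, v ∈ W1.support → v ∈ W2.support → v = b) :
    T.dist a c = T.dist a b + T.dist b c := by
  have hp1 : W1.IsPath := W1.isPath_of_length_eq_dist h1
  have hp2 : W2.IsPath := W2.isPath_of_length_eq_dist h2
  have hnodup2 : W2.support.tail.Nodup ∧ b ∉ W2.support.tail := by
    have := hp2.support_nodup
    rw [W2.support_eq_cons, List.nodup_cons] at this
    exact ⟨this.2, this.1⟩
  have hpath : (W1.append W2).IsPath := by
    rw [SimpleGraph.Walk.isPath_def, SimpleGraph.Walk.support_append]
    refine List.Nodup.append hp1.support_nodup hnodup2.1 ?_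
    intro v hv1 hv2
    have hv2' : v ∈ W2.support := by
      rw [W2.support_eq_cons]; exact List.mem_cons_of_mem _ hv2
    have := hdisj v hv1 hv2'
    subst this
    exact hnodup2.2 hv2
  have := path_length_eq hT _ hpath
  rw [SimpleGraph.Walk.length_append, h1, h2] at this
  omega

/-- Median existence in a tree. -/
lemma exists_median (a b c : V) :
    ∃ m, m ∈ seg T a b ∧ m ∈ seg T b c ∧ m ∈ seg T a c := by
  classical
  suffices H : ∀ n : ℕ, ∀ a b c : V, T.dist a b = n →
      ∃ m, m ∈ seg T a b ∧ m ∈ seg T b c ∧ m ∈ seg T a c by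
    exact H (T.dist a b) a b c rfl
  intro n
  induction n using Nat.strong_induction_on with
  | _ n ih =>
    intro a b c hab
    rcases Nat.eq_zero_or_pos n with hn | hn
    · subst hn
      have : a = b := hT.isConnected.dist_eq_zero_iff.1 hab
      subst this
      exact ⟨a, left_mem_seg a a, left_mem_seg a c, left_mem_seg a c⟩
    rcases Nat.eq_zero_or_pos (T.dist b c) with hbc | hbc
    · have : b = c := hT.isConnected.dist_eq_zero_iff.1 hbc
      subst this
      exact ⟨b, right_mem_seg a b, left_mem_seg b b, right_mem_seg a b⟩
    -- b' : neighbour of b towards a; b'' : neighbour of b towards c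
    have h1ab : 1 ≤ T.dist b a := by rw [T.dist_comm (u := b)] at *; omega
    obtain ⟨b', hb'seg, hb'1⟩ := exists_point_on_seg hT h1ab
    obtain ⟨b'', hb''seg, hb''1⟩ := exists_point_on_seg hT hbc
    by_cases hbb : b' = b''
    · -- recurse towards a
      have hb'ab : b' ∈ seg T a b := by rw [seg_comm]; exact hb'seg
      have hdab' : T.dist a b' = n - 1 := by
        rw [mem_seg] at hb'ab
        have : T.dist a b' = T.dist b' a := SimpleGraph.dist_comm
        have h2 : T.dist b b' + T.dist b' a = T.dist b a := hb'seg
        have h3 : T.dist b a = T.dist a b := SimpleGraph.dist_comm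
        omega
      obtain ⟨m, hm1, hm2, hm3⟩ := ih (n-1) (by omega) a b' c hdab'
      refine ⟨m, seg_sub_left hT hb'ab hm1, ?_, hm3⟩
      have hb''bc : b'' ∈ seg T b c := hb''seg
      have : seg T b' c ⊆ seg T b c := by
        rw [← hbb] at hb''bc
        exact seg_sub_right hT hb''bc
      exact this hm2
    · -- b is the median
      refine ⟨b, right_mem_seg a b, left_mem_seg b c, ?_⟩
      obtain ⟨W1, hW1⟩ := hT.isConnected.exists_walk_length_eq_dist a b
      obtain ⟨W2, hW2⟩ := hT.isConnected.exists_walk_length_eq_dist b c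
      have hdisj : ∀ v, v ∈ W1.support → v ∈ W2.support → v = b := by
        intro v hv1 hv2
        by_contra hvb
        have hvab : v ∈ seg T a b := (mem_walk_support_iff_mem_seg hT W1 hW1 v).1 hv1
        have hvbc : v ∈ seg T b c := (mem_walk_support_iff_mem_seg hT W2 hW2 v).1 hv2
        have hvba : v ∈ seg T b a := by rw [seg_comm]; exact hvab
        have hdbv : 1 ≤ T.dist b v := by
          rcases Nat.eq_zero_or_pos (T.dist b v) with h0 | h0
          · exact absurd (hT.isConnected.dist_eq_zero_iff.1 h0).symm hvb
          · omega
        have hsub1 : seg T b v ⊆ seg T b a := seg_sub_left hT hvba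
        have hsub2 : seg T b v ⊆ seg T b c := seg_sub_left hT hvbc
        obtain ⟨p1, hp1seg, hp1d⟩ := exists_point_on_seg hT hdbv
        have hp1a : p1 = b' :=
          eq_of_mem_seg_dist_eq hT (hsub1 hp1seg) hb'seg (by omega)
        have hp1c : p1 = b'' :=
          eq_of_mem_seg_dist_eq hT (hsub2 hp1seg) hb''seg (by omega)
        exact hbb (hp1a ▸ hp1c)
      have := dist_add_of_disjoint hT W1 W2 hW1 hW2 hdisj
      rw [mem_seg]
      omega



section Action

variable {G : Type*} [Group G] [MulAction G V]
variable (haut : ∀ (g : G) (a b : V), T.Adj (g • a) (g • b) ↔ T.Adj a b)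
include haut

lemma dist_smul_le (g : G) (a b : V) : T.dist (g • a) (g • b) ≤ T.dist a b := by
  obtain ⟨W, hW⟩ := hT.isConnected.exists_walk_length_eq_dist a b
  let f : T →g T := ⟨fun v => g • v, fun {x y} hxy => (haut g x y).mpr hxy⟩
  have hle : T.dist (g • a) (g • b) ≤ (W.map f).length := T.dist_le (W.map f)
  rwa [SimpleGraph.Walk.length_map, hW] at hle

lemma dist_smul (g : G) (a b : V) : T.dist (g • a) (g • b) = T.dist a b := by
  refine le_antisymm (dist_smul_le hT haut g a b) ?_
  have := dist_smul_le hT haut g⁻¹ (g • a) (g • b)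
  simpa using this

lemma smul_seg {a b p : V} (g : G) (hp : p ∈ seg T a b) : g • p ∈ seg T (g • a) (g • b) := by
  rw [mem_seg] at *
  rw [dist_smul hT haut, dist_smul hT haut, dist_smul hT haut]
  exact hp

variable {h : G} {ℓ : ℕ}

lemma axis_smul_zpow {u : V} (hu : T.dist u (h • u) = ℓ) (i : ℤ) :
    T.dist (h ^ i • u) (h • h ^ i • u) = ℓ := by
  have hc : h • h ^ i • u = h ^ i • h • u := by
    rw [smul_smul, smul_smul, ← zpow_one_add, ← zpow_add_one, add_comm]
  rw [hc, dist_smul hT haut]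
  exact hu

/-- Goal A : the two-step displacement is `2ℓ`. -/
lemma two_step (hfix : ∀ w : V, h • w ≠ w)
    (hinv : ∀ a b : V, T.Adj a b → h • a = b → h • b ≠ a)
    (hmin : ∀ u : V, ℓ ≤ T.dist u (h • u))
    {u : V} (hu : T.dist u (h • u) = ℓ) :
    h • u ∈ seg T u (h • h • u) := by
  have hℓ1 : 1 ≤ ℓ := by
    rcases Nat.eq_zero_or_pos ℓ with h0 | h0
    · rw [h0] at hu
      exact absurd (hT.isConnected.dist_eq_zero_iff.1 hu).symm (hfix u)
    · omega
  have hu2 : T.dist (h • u) (h • h • u) = ℓ := by rw [dist_smul hT haut]; exact hu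
  obtain ⟨m, hm1, hm2, hm3⟩ := exists_median hT u (h • u) (h • h • u)
  set k := T.dist (h • u) m with hk
  have hkm : T.dist m (h • u) = k := SimpleGraph.dist_comm
  have hkle : k ≤ ℓ := by rw [mem_seg] at hm2; omega
  have hdum : T.dist u m = ℓ - k := by rw [mem_seg] at hm1; omega
  obtain ⟨m', hm'seg, hm'd⟩ := exists_point_on_seg hT (show k ≤ T.dist u (h • u) by omega)
  have hhm' : h • m' ∈ seg T (h • u) (h • h • u) := smul_seg hT haut h hm'seg
  have hdm' : T.dist (h • u) (h • m') = k := by rw [dist_smul hT haut]; exact hm'd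
  have hmeq : h • m' = m := eq_of_mem_seg_dist_eq hT hhm' hm2 (by omega)
  rcases le_or_gt (2 * k) ℓ with h2k | h2k
  · -- case 2k ≤ ℓ : k = 0 so m = h•u and h•u ∈ seg u h²u
    have hm'm : m' ∈ seg T u m := mem_seg_of_dist_le hT hm'seg hm1 (by omega)
    have hdm'm : T.dist m' m = ℓ - 2 * k := by rw [mem_seg] at hm'm; omega
    have hmin' := hmin m'
    have h2 : T.dist m' (h • m') = ℓ - 2 * k := by rw [hmeq]; exact hdm'm
    have hk0 : k = 0 := by omega
    have hmhu : m = h • u := by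
      apply hT.isConnected.dist_eq_zero_iff.1
      omega
    rwa [hmhu] at hm3
  · -- case 2k > ℓ : forces k = ℓ and u = h²u, contradiction
    exfalso
    have hmm' : m ∈ seg T u m' := mem_seg_of_dist_le hT hm1 hm'seg (by omega)
    have hdmm' : T.dist m m' = 2 * k - ℓ := by rw [mem_seg] at hmm'; omega
    have hmin' := hmin m'
    have h2 : T.dist m' (h • m') = 2 * k - ℓ := by
      rw [hmeq, SimpleGraph.dist_comm]; exact hdmm'
    have hkℓ : k = ℓ := by omega
    have hm'hu : m' = h • u :=
      eq_of_mem_seg_dist_eq hT hm'seg (right_mem_seg u (h • u)) (by simpa [hu] using by omega)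
    have hmu : m = u := by
      have : T.dist u m = 0 := by omega
      exact (hT.isConnected.dist_eq_zero_iff.1 this).symm
    have huu : h • h • u = u := by rw [← hm'hu, hmeq, hmu]
    -- now the parity contradiction
    set r := ℓ / 2 with hr
    obtain ⟨c, hcseg, hcd⟩ := exists_point_on_seg hT (show r ≤ T.dist u (h • u) by omega)
    have hsegswap : seg T (h • u) (h • h • u) = seg T u (h • u) := by
      rw [huu, seg_comm]
    have hc2 : h • c ∈ seg T u (h • u) := by
      rw [← hsegswap]; exact smul_seg hT haut h hcseg
    have hdhc : T.dist (h • u) (h • c) = r := by rw [dist_smul hT haut]; exact hcd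
    have hdhc' : T.dist u (h • c) = ℓ - r := by
      rw [← hsegswap] at hc2
      rw [mem_seg] at hc2
      have e1 : T.dist (h • u) (h • c) + T.dist (h • c) (h • h • u) = T.dist (h • u) (h • h • u) := hc2
      rw [huu] at e1
      have e2 : T.dist (h • c) u = T.dist u (h • c) := SimpleGraph.dist_comm
      have e3 : T.dist (h • u) u = T.dist u (h • u) := SimpleGraph.dist_comm
      omega
    rcases Nat.even_or_odd ℓ with heven | hodd
    · have hrr : ℓ - r = r := by
        obtain ⟨s, hs⟩ := heven; omega
      have : c = h • c := eq_of_mem_seg_dist_eq hT hcseg hc2 (by omega)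
      exact hfix c this.symm
    · -- ℓ odd : c at distance r, c' at distance r+1, h swaps them
      have hrodd : ℓ = 2 * r + 1 := by
        obtain ⟨s, hs⟩ := hodd; omega
      obtain ⟨c', hc'seg, hc'd⟩ := exists_point_on_seg hT
        (show r + 1 ≤ T.dist u (h • u) by omega)
      have hhcc' : h • c = c' := eq_of_mem_seg_dist_eq hT hc2 hc'seg (by omega)
      -- h • c' = c
      have hc'2 : h • c' ∈ seg T u (h • u) := by
        rw [← hsegswap]; exact smul_seg hT haut h hc'seg
      have hdhc2 : T.dist u (h • c') = r := by
        have hd1 : T.dist (h • u) (h • c') = r + 1 := by rw [dist_smul hT haut]; exact hc'd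
        have hc'3 := hc'2
        rw [← hsegswap, mem_seg] at hc'3
        rw [huu] at hc'3
        have e2 : T.dist (h • c') u = T.dist u (h • c') := SimpleGraph.dist_comm
        have e3 : T.dist (h • u) u = T.dist u (h • u) := SimpleGraph.dist_comm
        omega
      have hhc'c : h • c' = c := eq_of_mem_seg_dist_eq hT hc'2 hcseg (by omega)
      have hcc'1 : T.dist c c' = 1 := by
        have : c ∈ seg T u c' := mem_seg_of_dist_le hT hcseg hc'seg (by omega)
        rw [mem_seg] at this
        omega
      exact hinv c c' (SimpleGraph.dist_eq_one_iff_adj.mp hcc'1) hhcc' hhc'c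

/-- Goal B : `d(u, hⁿu) = nℓ` for an axis point. -/
lemma pow_dist (hfix : ∀ w : V, h • w ≠ w)
    (hinv : ∀ a b : V, T.Adj a b → h • a = b → h • b ≠ a)
    (hmin : ∀ u : V, ℓ ≤ T.dist u (h • u))
    {u : V} (hu : T.dist u (h • u) = ℓ) :
    ∀ n : ℕ, T.dist u ((h ^ n : G) • u) = n * ℓ := by
  intro n
  induction n using Nat.strong_induction_on with
  | _ n ih =>
    match n with
    | 0 => simp [SimpleGraph.dist_self]
    | 1 => simpa using hu
    | (n + 2) =>
      have ih1 := ih (n + 1) (by omega)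
      have ih0 := ih n (by omega)
      set b := (h ^ (n + 1) : G) • u with hbdef
      set c := (h ^ (n + 2) : G) • u with hcdef
      set p := (h ^ n : G) • u with hpdef
      have hdpb : T.dist p b = ℓ := by
        have : b = (h ^ n : G) • (h • u) := by
          rw [hbdef, pow_succ, mul_smul]
        rw [this, hpdef, dist_smul hT haut]; exact hu
      have hdbc : T.dist b c = ℓ := by
        have hb' : b = (h ^ (n + 1) : G) • u := hbdef
        have hc' : c = (h ^ (n + 1) : G) • (h • u) := by
          rw [hcdef, pow_succ, mul_smul]
        rw [hb', hc', dist_smul hT haut]; exact hu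
      have hexp1 : (n + 1) * ℓ = n * ℓ + ℓ := by ring
      have hexp2 : (n + 2) * ℓ = n * ℓ + ℓ + ℓ := by ring
      have hpseg : p ∈ seg T u b := by rw [mem_seg]; omega
      obtain ⟨m, hm1, hm2, hm3⟩ := exists_median hT u b c
      set k := T.dist b m with hk
      have hkle : k ≤ ℓ := by
        rw [mem_seg] at hm2; omega
      have hmba : m ∈ seg T b u := by rw [seg_comm]; exact hm1
      have hpba : p ∈ seg T b u := by rw [seg_comm]; exact hpseg
      have hdbp : T.dist b p = ℓ := SimpleGraph.dist_comm.trans hdpb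
      have hmbp : m ∈ seg T b p := mem_seg_of_dist_le hT hmba hpba (by omega)
      -- transport to the two-step configuration via g := (h^n)⁻¹
      set g : G := (h ^ n : G)⁻¹ with hg
      have hgb : g • b = h • u := by
        have e : (h ^ n : G)⁻¹ * h ^ (n + 1) = h := by simp [pow_succ, mul_assoc]
        rw [hg, hbdef, smul_smul, e]
      have hgc : g • c = h • h • u := by
        have e : (h ^ n : G)⁻¹ * h ^ (n + 2) = h * h := by simp [pow_succ, mul_assoc]
        rw [hg, hcdef, smul_smul, e, mul_smul]
      have hgp : g • p = u := by rw [hg, hpdef, smul_smul]; simp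
      have hm0bp : g • m ∈ seg T (h • u) u := by
        have := smul_seg hT haut g hmbp
        rwa [hgb, hgp] at this
      have hm0bc : g • m ∈ seg T (h • u) (h • h • u) := by
        have := smul_seg hT haut g hm2
        rwa [hgb, hgc] at this
      have hdk : T.dist (h • u) (g • m) = k := by
        rw [← hgb, dist_smul hT haut]
      have hts := two_step hT haut hfix hinv hmin hu
      rw [mem_seg] at hts
      have h2step : T.dist u (h • h • u) = 2 * ℓ := by
        rw [dist_smul hT haut] at hts
        omega
      have e1 : T.dist (h • u) (g • m) + T.dist (g • m) u = T.dist (h • u) u := hm0bp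
      have e2 : T.dist (h • u) (g • m) + T.dist (g • m) (h • h • u)
          = T.dist (h • u) (h • h • u) := hm0bc
      have e3 : T.dist u (h • h • u) ≤ T.dist u (g • m) + T.dist (g • m) (h • h • u) :=
        hT.isConnected.dist_triangle
      have e4 : T.dist (h • u) u = T.dist u (h • u) := SimpleGraph.dist_comm
      have e5 : T.dist (g • m) u = T.dist u (g • m) := SimpleGraph.dist_comm
      have hk0 : k = 0 := by
        rw [dist_smul hT haut] at e2
        omega
      have hbm : b = m := by
        apply hT.isConnected.dist_eq_zero_iff.1
        omega
      rw [← hbm, mem_seg] at hm3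
      omega


omit hT haut in
lemma smul_zpow (j : ℤ) (u : V) : h • (h ^ j • u) = h ^ (j + 1) • u := by
  have e : (1:ℤ) + j = j + 1 := add_comm 1 j
  rw [smul_smul, ← zpow_one_add, e]

omit hT haut in
lemma inv_smul_zpow (j : ℤ) (u : V) : h⁻¹ • (h ^ j • u) = h ^ (j - 1) • u := by
  have e : (-1:ℤ) + j = j - 1 := by ring
  rw [smul_smul, ← zpow_neg_one, ← zpow_add, e]

omit hT haut in
lemma ell_pos (hfix : ∀ w : V, h • w ≠ w) {u : V} (hu : T.dist u (h • u) = ℓ)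
    (hc : T.Connected) : 1 ≤ ℓ := by
  rcases Nat.eq_zero_or_pos ℓ with h0 | h0
  · rw [h0] at hu
    exact absurd (hc.dist_eq_zero_iff.1 hu).symm (hfix u)
  · omega

/-- distances between ℤ-translates of an axis point -/
lemma zpow_dist (hfix : ∀ w : V, h • w ≠ w)
    (hinv : ∀ a b : V, T.Adj a b → h • a = b → h • b ≠ a)
    (hmin : ∀ u : V, ℓ ≤ T.dist u (h • u))
    {u : V} (hu : T.dist u (h • u) = ℓ) (i j : ℤ) :
    T.dist (h ^ i • u) (h ^ j • u) = (i - j).natAbs * ℓ := by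
  have base : ∀ m : ℤ, T.dist u (h ^ m • u) = m.natAbs * ℓ := by
    intro m
    rcases le_or_gt 0 m with hm | hm
    · obtain ⟨k, rfl⟩ := Int.eq_ofNat_of_zero_le hm
      rw [zpow_natCast]
      simpa using pow_dist hT haut hfix hinv hmin hu k
    · have e1 : (h ^ (-m) : G) • (h ^ m • u) = u := by
        rw [smul_smul, ← zpow_add]
        simp
      have e2 : T.dist (h ^ (-m) • u) (h ^ (-m) • (h ^ m • u)) = T.dist u (h ^ m • u) :=
        dist_smul hT haut _ _ _
      rw [e1] at e2
      rw [← e2, SimpleGraph.dist_comm]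
      obtain ⟨k, hk⟩ := Int.eq_ofNat_of_zero_le (show 0 ≤ -m by omega)
      rw [hk, zpow_natCast]
      have := pow_dist hT haut hfix hinv hmin hu k
      rw [this]
      congr 1
      omega
  have e1 : (h ^ (-i) : G) • (h ^ i • u) = u := by
    rw [smul_smul, ← zpow_add]; simp
  have e2 : (h ^ (-i) : G) • (h ^ j • u) = h ^ (j - i) • u := by
    rw [smul_smul, ← zpow_add]
    congr 1
    ring
  have e3 := dist_smul hT haut (h ^ (-i) : G) (h ^ i • u) (h ^ j • u)
  rw [e1, e2] at e3
  rw [← e3, base (j - i)]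
  congr 1
  omega

/-- points of the line through an axis point -/
lemma mem_line (hfix : ∀ w : V, h • w ≠ w)
    (hinv : ∀ a b : V, T.Adj a b → h • a = b → h • b ≠ a)
    (hmin : ∀ u : V, ℓ ≤ T.dist u (h • u))
    {u : V} (hu : T.dist u (h • u) = ℓ) (M : ℕ) (j : ℤ) (hj : j.natAbs ≤ M) :
    h ^ j • u ∈ seg T (h ^ (-(M:ℤ)) • u) (h ^ (M:ℤ) • u) := by
  rw [mem_seg, zpow_dist hT haut hfix hinv hmin hu, zpow_dist hT haut hfix hinv hmin hu,
    zpow_dist hT haut hfix hinv hmin hu, ← add_mul]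
  congr 1
  omega

/-- Claim 1 : points of a line segment starting at an axis point are on the axis. -/
lemma seg_line_axis (hfix : ∀ w : V, h • w ≠ w)
    (hinv : ∀ a b : V, T.Adj a b → h • a = b → h • b ≠ a)
    (hmin : ∀ u : V, ℓ ≤ T.dist u (h • u))
    {u : V} (hu : T.dist u (h • u) = ℓ) (n : ℕ) {p : V}
    (hp : p ∈ seg T u ((h ^ n : G) • u)) : T.dist p (h • p) = ℓ := by
  have Dn := pow_dist hT haut hfix hinv hmin hu n
  have Dn1 := pow_dist hT haut hfix hinv hmin hu (n + 1)
  have hexp : (n + 1) * ℓ = n * ℓ + ℓ := by ring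
  have hstep : T.dist ((h ^ n : G) • u) ((h ^ (n+1) : G) • u) = ℓ := by
    have e : (h ^ (n+1) : G) • u = (h ^ n : G) • (h • u) := by
      rw [pow_succ, mul_smul]
    rw [e, dist_smul hT haut]; exact hu
  have hnn1 : (h ^ n : G) • u ∈ seg T u ((h ^ (n+1) : G) • u) := by
    rw [mem_seg]; omega
  have hpS : p ∈ seg T u ((h ^ (n+1) : G) • u) := seg_sub_left hT hnn1 hp
  have hhuS : h • u ∈ seg T u ((h ^ (n+1) : G) • u) := by
    rw [mem_seg]
    have e : T.dist (h • u) ((h ^ (n+1) : G) • u) = n * ℓ := by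
      have e2 : (h ^ (n+1) : G) • u = h • ((h ^ n : G) • u) := by
        rw [pow_succ', mul_smul]
      rw [e2, dist_smul hT haut]; exact Dn
    omega
  have hp1 : h • p ∈ seg T (h • u) ((h ^ (n+1) : G) • u) := by
    have := smul_seg hT haut h hp
    have e2 : (h ^ (n+1) : G) • u = h • ((h ^ n : G) • u) := by
      rw [pow_succ', mul_smul]
    rwa [← e2] at this
  have hp1S : h • p ∈ seg T u ((h ^ (n+1) : G) • u) :=
    seg_sub_seg hT hhuS (right_mem_seg _ _) hp1
  have hts : T.dist u p + T.dist p ((h ^ n : G) • u) = n * ℓ := by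
    rw [mem_seg] at hp; omega
  have hdhp : T.dist (h • p) ((h ^ (n+1) : G) • u) = T.dist p ((h ^ n : G) • u) := by
    have e2 : (h ^ (n+1) : G) • u = h • ((h ^ n : G) • u) := by
      rw [pow_succ', mul_smul]
    rw [e2, dist_smul hT haut]
  have hdup : T.dist u (h • p) = ℓ + T.dist u p := by
    have hle : T.dist u (h • p) ≤ T.dist u (h • u) + T.dist (h • u) (h • p) :=
      hT.isConnected.dist_triangle
    rw [dist_smul hT haut] at hle
    have hge : T.dist u ((h ^ (n+1) : G) • u) ≤
        T.dist u (h • p) + T.dist (h • p) ((h ^ (n+1) : G) • u) :=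
      hT.isConnected.dist_triangle
    omega
  have hfin : p ∈ seg T u (h • p) := mem_seg_of_dist_le hT hpS hp1S (by omega)
  rw [mem_seg] at hfin
  omega

/-- Claim 2 : every axis point lies on the line of any other axis point. -/
lemma axis_in_line (hfix : ∀ w : V, h • w ≠ w)
    (hinv : ∀ a b : V, T.Adj a b → h • a = b → h • b ≠ a)
    (hmin : ∀ u : V, ℓ ≤ T.dist u (h • u))
    {u v : V} (hu : T.dist u (h • u) = ℓ) (hv : T.dist v (h • v) = ℓ)
    {N : ℕ} (hN : T.dist u v + 2 ≤ N) :
    v ∈ seg T (h ^ (-(N:ℤ)) • u) (h ^ (N:ℤ) • u) := by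
  have hℓ1 : 1 ≤ ℓ := ell_pos hfix hu hT.isConnected
  have zd := zpow_dist hT haut hfix hinv hmin hu
  have ml := mem_line hT haut hfix hinv hmin hu
  set a := (h ^ (-(N:ℤ)) : G) • u with hadef
  set b := (h ^ (N:ℤ) : G) • u with hbdef
  set M := N - 1 with hM
  have hMN : (M : ℤ) = (N : ℤ) - 1 := by omega
  obtain ⟨p, hp1, hp2, hp3⟩ := exists_median hT a v b
  -- projection property
  have proj : ∀ q, q ∈ seg T a b → T.dist v q = T.dist v p + T.dist p q := by
    intro q hq
    rcases seg_split hT hp3 hq with hq' | hq'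
    · have hqav : q ∈ seg T a v := seg_sub_left hT hp1 hq'
      rw [mem_seg] at hq' hp1 hqav
      have c1 : T.dist v q = T.dist q v := SimpleGraph.dist_comm
      have c2 : T.dist v p = T.dist p v := SimpleGraph.dist_comm
      have c3 : T.dist p q = T.dist q p := SimpleGraph.dist_comm
      omega
    · have hqvb : q ∈ seg T v b := seg_sub_right hT hp2 hq'
      rw [mem_seg] at hq' hp2 hqvb
      omega
  have humem : u ∈ seg T a b := by
    have h0 := ml N 0 (by simp)
    rw [zpow_zero, one_smul] at h0
    exact h0
  have hproju := proj u humem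
  have hcvu : T.dist v u = T.dist u v := SimpleGraph.dist_comm
  have hcup : T.dist p u = T.dist u p := SimpleGraph.dist_comm
  -- p lies on the slightly smaller line segment
  have hNle : M ≤ M * ℓ := Nat.le_mul_of_pos_right _ (by omega)
  have hpM : p ∈ seg T (h ^ (-(M:ℤ)) • u) (h ^ (M:ℤ) • u) := by
    have huM : u ∈ seg T (h ^ (-(M:ℤ)) • u) (h ^ (M:ℤ) • u) := by
      have h0 := ml M 0 (by simp)
      rw [zpow_zero, one_smul] at h0
      exact h0
    have haM : h ^ (-(M:ℤ)) • u ∈ seg T (h ^ (-(M:ℤ)) • u) (h ^ (M:ℤ) • u) :=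
      left_mem_seg _ _
    have hbM : h ^ (M:ℤ) • u ∈ seg T (h ^ (-(M:ℤ)) • u) (h ^ (M:ℤ) • u) :=
      right_mem_seg _ _
    rcases seg_split hT humem hp3 with hpa | hpb
    · -- p between a and u
      have hpua : p ∈ seg T u a := by rw [seg_comm]; exact hpa
      have haM' : h ^ (-(M:ℤ)) • u ∈ seg T u a := by
        rw [mem_seg]
        have d1 : T.dist u (h ^ (-(M:ℤ)) • u) = M * ℓ := by
          have := zd 0 (-(M:ℤ))
          simpa using this
        have d2 : T.dist (h ^ (-(M:ℤ)) • u) a = ℓ := by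
          rw [hadef, zd]
          have : ((-(M:ℤ)) - (-(N:ℤ))).natAbs = 1 := by omega
          rw [this, one_mul]
        have d3 : T.dist u a = N * ℓ := by
          have := zd 0 (-(N:ℤ))
          simpa [hadef] using this
        have hNN : N * ℓ = M * ℓ + ℓ := by
          have : N = M + 1 := by omega
          rw [this]; ring
        omega
      have : p ∈ seg T u (h ^ (-(M:ℤ)) • u) := by
        apply mem_seg_of_dist_le hT hpua haM'
        have d1 : T.dist u (h ^ (-(M:ℤ)) • u) = M * ℓ := by
          have := zd 0 (-(M:ℤ))
          simpa using this
        omega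
      exact seg_sub_seg hT huM haM this
    · -- p between u and b
      have hbM' : h ^ (M:ℤ) • u ∈ seg T u b := by
        rw [mem_seg]
        have d1 : T.dist u (h ^ (M:ℤ) • u) = M * ℓ := by
          have := zd 0 (M:ℤ)
          simpa using this
        have d2 : T.dist (h ^ (M:ℤ) • u) b = ℓ := by
          rw [hbdef, zd]
          have : ((M:ℤ) - (N:ℤ)).natAbs = 1 := by omega
          rw [this, one_mul]
        have d3 : T.dist u b = N * ℓ := by
          have := zd 0 (N:ℤ)
          simpa [hbdef] using this
        have hNN : N * ℓ = M * ℓ + ℓ := by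
          have : N = M + 1 := by omega
          rw [this]; ring
        omega
      have : p ∈ seg T u (h ^ (M:ℤ) • u) := by
        apply mem_seg_of_dist_le hT hpb hbM'
        have d1 : T.dist u (h ^ (M:ℤ) • u) = M * ℓ := by
          have := zd 0 (M:ℤ)
          simpa using this
        omega
      exact seg_sub_seg hT huM hbM this
  -- p is on the axis
  have hpab : p ∈ seg T a b := hp3
  have hpax : T.dist p (h • p) = ℓ := by
    have ha_ax : T.dist a (h • a) = ℓ := axis_smul_zpow hT haut hu _
    have e : (h ^ (2*N) : G) • a = b := by
      rw [hadef, hbdef, smul_smul]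
      have e2 : (h ^ (2*N) : G) * h ^ (-(N:ℤ)) = h ^ (N:ℤ) := by
        rw [← zpow_natCast h (2*N), ← zpow_add]
        congr 1
        push_cast
        ring
      rw [e2]
    have : p ∈ seg T a ((h ^ (2*N) : G) • a) := by rw [e]; exact hp3
    exact seg_line_axis hT haut hfix hinv hmin ha_ax (2*N) this
  -- h•p and h⁻¹•p are on the big line
  have hhp_line : h • p ∈ seg T a b := by
    have h1 := smul_seg hT haut h hpM
    rw [smul_zpow, smul_zpow] at h1
    have e1 : h ^ (-(M:ℤ) + 1) • u ∈ seg T a b := ml N (-(M:ℤ) + 1) (by omega)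
    have e2 : h ^ ((M:ℤ) + 1) • u ∈ seg T a b := ml N ((M:ℤ) + 1) (by omega)
    exact seg_sub_seg hT e1 e2 h1
  have hinvp_line : h⁻¹ • p ∈ seg T a b := by
    have h1 := smul_seg hT haut h⁻¹ hpM
    rw [inv_smul_zpow, inv_smul_zpow] at h1
    have e1 : h ^ (-(M:ℤ) - 1) • u ∈ seg T a b := ml N (-(M:ℤ) - 1) (by omega)
    have e2 : h ^ ((M:ℤ) - 1) • u ∈ seg T a b := ml N ((M:ℤ) - 1) (by omega)
    exact seg_sub_seg hT e1 e2 h1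
  -- key distances
  have dvhp : T.dist v (h • p) = T.dist v p + ℓ := by
    rw [proj _ hhp_line, hpax]
  have dpinv : T.dist p (h⁻¹ • p) = ℓ := by
    have := dist_smul hT haut h⁻¹ (h • p) p
    rw [inv_smul_smul] at this
    rw [this, SimpleGraph.dist_comm]
    exact hpax
  have dvinvp : T.dist v (h⁻¹ • p) = T.dist v p + ℓ := by
    rw [proj _ hinvp_line, dpinv]
  have dhvp : T.dist (h • v) p = T.dist v p + ℓ := by
    have := dist_smul hT haut h⁻¹ (h • v) p
    rw [inv_smul_smul] at this
    rw [← this, dvinvp]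
  have dphv : T.dist p (h • v) = T.dist v p + ℓ := SimpleGraph.dist_comm.trans dhvp
  have dhphv : T.dist (h • p) (h • v) = T.dist p v := dist_smul hT haut h p v
  have hcpv : T.dist p v = T.dist v p := SimpleGraph.dist_comm
  have hp_phv : h • p ∈ seg T p (h • v) := by
    rw [mem_seg, hpax, dhphv, dphv]
    omega
  -- median of v, p, h•v
  obtain ⟨m, hq1, hq2, hq3⟩ := exists_median hT v p (h • v)
  have hcpm : T.dist m p = T.dist p m := SimpleGraph.dist_comm
  rcases le_or_gt (T.dist p m) ℓ with hs | hs
  · -- s ≤ ℓ : m ∈ seg p (h•p) ⊆ line, so m = p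
    have hmhp : m ∈ seg T p (h • p) := by
      apply mem_seg_of_dist_le hT hq2 hp_phv
      rw [hpax]; exact hs
    have hm_line : m ∈ seg T a b := seg_sub_seg hT hpab hhp_line hmhp
    have hdvm := proj m hm_line
    have hq1' := hq1
    rw [mem_seg] at hq1'
    have hcmp : T.dist v m + T.dist m p = T.dist v p := hq1'
    have hs0 : T.dist p m = 0 := by omega
    have hmp : p = m := hT.isConnected.dist_eq_zero_iff.1 hs0
    -- so p ∈ seg v (h•v)
    have hpvhv : p ∈ seg T v (h • v) := by rw [hmp]; exact hq3
    rw [mem_seg, hv, dphv] at hpvhv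
    have ht0 : T.dist v p = 0 := by omega
    have : v = p := hT.isConnected.dist_eq_zero_iff.1 ht0
    rw [this]
    exact hp3
  · -- s > ℓ : contradiction
    exfalso
    have hhp_pm : h • p ∈ seg T p m := by
      apply mem_seg_of_dist_le hT hp_phv hq2
      rw [hpax]; omega
    have hq1' : m ∈ seg T p v := by rw [seg_comm]; exact hq1
    have : h • p ∈ seg T p v := seg_sub_left hT hq1' hhp_pm
    rw [mem_seg, hpax] at this
    have hc2 : T.dist (h • p) v = T.dist v (h • p) := SimpleGraph.dist_comm
    omega

end Action

section Line

variable (hT : T.IsTree)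
include hT

lemma line_dist {a b r s : V} (hr : r ∈ seg T a b) (hs : s ∈ seg T a b) :
    T.dist r s = ((T.dist a r : ℤ) - T.dist a s).natAbs := by
  rcases le_total (T.dist a r) (T.dist a s) with hle | hle
  · have h1 : r ∈ seg T a s := mem_seg_of_dist_le hT hr hs hle
    rw [mem_seg] at h1
    omega
  · have h1 : s ∈ seg T a r := mem_seg_of_dist_le hT hs hr hle
    rw [mem_seg] at h1
    have c1 : T.dist s r = T.dist r s := SimpleGraph.dist_comm
    omega

lemma line_between {a b r s q : V} (hr : r ∈ seg T a b) (hs : s ∈ seg T a b)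
    (hq : q ∈ seg T a b) (h1 : T.dist a r ≤ T.dist a q) (h2 : T.dist a q ≤ T.dist a s) :
    q ∈ seg T r s := by
  have hrq : r ∈ seg T a q := mem_seg_of_dist_le hT hr hq h1
  have hqs : q ∈ seg T a s := mem_seg_of_dist_le hT hq hs h2
  have hrs : r ∈ seg T a s := mem_seg_of_dist_le hT hr hs (h1.trans h2)
  rw [mem_seg] at hrq hqs hrs ⊢
  have c1 : T.dist r q = T.dist q r := SimpleGraph.dist_comm
  omega

end Line

section Arith

omit hT in
lemma pick (ℓz lo0 u0 : ℤ) (hl : 1 ≤ ℓz) :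
    ∃ s : ℤ, lo0 < u0 + s * ℓz ∧ u0 + s * ℓz ≤ lo0 + ℓz ∧
      (s * ℓz).natAbs ≤ (lo0 - u0).natAbs + ℓz.natAbs := by
  set q := (lo0 - u0) / ℓz with hq
  set r := (lo0 - u0) % ℓz with hr
  have hdm : ℓz * q + r = lo0 - u0 := Int.mul_ediv_add_emod _ _
  have h0 : 0 ≤ r := Int.emod_nonneg _ (by omega)
  have h1 : r < ℓz := Int.emod_lt_of_pos _ (by omega)
  refine ⟨q + 1, ?_, ?_, ?_⟩ <;>
  · have key : (q + 1) * ℓz = lo0 - u0 - r + ℓz := by linear_combination hdm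
    omega

omit hT in
/-- pure arithmetic : selection of a translate index landing in a long interval -/
lemma arith_select (ℓ K J X : ℕ) (u : ℤ → ℤ) (lo hi : ℤ)
    (hl : 1 ≤ ℓ)
    (hdiff : ∀ i j : ℤ, i.natAbs ≤ J → j.natAbs ≤ J →
      (u i - u j).natAbs = (i - j).natAbs * ℓ)
    (hXlo : (lo - u 0).natAbs ≤ X) (hXhi : (hi - u 0).natAbs ≤ X)
    (hJ : X + 2 * K * ℓ + 2 * ℓ + 2 * K + 5 ≤ J)
    (hgap : lo + 2 * K * ℓ + ℓ ≤ hi) :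
    ∃ j : ℤ, j.natAbs ≤ J ∧ (j + 2 * K).natAbs ≤ J ∧
      lo ≤ u j ∧ u j ≤ hi ∧ lo ≤ u (j + 2 * K) ∧ u (j + 2 * K) ≤ hi := by
  have hKℓ : ((2 * K * ℓ : ℕ) : ℤ) = 2 * (K : ℤ) * (ℓ : ℤ) := by push_cast; ring
  have formula : ∀ j : ℤ, j.natAbs ≤ J →
      (u j = u 0 + j * ℓ ∧ u (J:ℤ) = u 0 + J * ℓ) ∨
      (u j = u 0 - j * ℓ ∧ u (J:ℤ) = u 0 - J * ℓ) := by
    intro j hj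
    have hE := hdiff (J : ℤ) (-(J : ℤ)) (by omega) (by omega)
    have hA := hdiff j (-(J:ℤ)) (by omega) (by omega)
    have hB := hdiff (J:ℤ) j (by omega) (by omega)
    have h0 := hdiff 0 (-(J:ℤ)) (by omega) (by omega)
    have hB0 := hdiff (J:ℤ) 0 (by omega) (by omega)
    set P := (j - -(J:ℤ)).natAbs with hP
    set Q := ((J:ℤ) - j).natAbs with hQ
    have e1 : ((J:ℤ) - -(J:ℤ)).natAbs = 2 * J := by omega
    have e2 : P + Q = 2 * J := by omega
    have e3 : ((0:ℤ) - -(J:ℤ)).natAbs = J := by omega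
    have e4 : (((J:ℤ)) - 0).natAbs = J := by omega
    rw [e1] at hE
    rw [e3] at h0
    rw [e4] at hB0
    have e5 : ((P : ℕ) : ℤ) = j + J := by omega
    have hsum : P * ℓ + Q * ℓ = 2 * J * ℓ := by rw [← add_mul, e2]
    have hsum0 : J * ℓ + J * ℓ = 2 * J * ℓ := by ring
    have c1 : ((P * ℓ : ℕ) : ℤ) = ((j + J)) * ℓ := by push_cast; rw [e5]
    have c2 : ((J * ℓ : ℕ) : ℤ) = (J : ℤ) * ℓ := by push_cast; ring
    rcases le_or_gt (u (-(J:ℤ))) (u (J:ℤ)) with hor | hor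
    · left
      have f1 : u j - u (-(J:ℤ)) = ((P * ℓ : ℕ) : ℤ) := by omega
      have f2 : u 0 - u (-(J:ℤ)) = ((J * ℓ : ℕ) : ℤ) := by omega
      have f3 : u (J:ℤ) - u 0 = ((J * ℓ : ℕ) : ℤ) := by omega
      constructor
      · have hd : u j - u 0 = ((P * ℓ : ℕ) : ℤ) - ((J * ℓ : ℕ) : ℤ) := by omega
        rw [c1, c2] at hd
        linarith
      · rw [c2] at f3
        linarith
    · right
      have f1 : u j - u (-(J:ℤ)) = -((P * ℓ : ℕ) : ℤ) := by omega
      have f2 : u 0 - u (-(J:ℤ)) = -((J * ℓ : ℕ) : ℤ) := by omega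
      have f3 : u (J:ℤ) - u 0 = -((J * ℓ : ℕ) : ℤ) := by omega
      constructor
      · have hd : u j - u 0 = -((P * ℓ : ℕ) : ℤ) + ((J * ℓ : ℕ) : ℤ) := by omega
        rw [c1, c2] at hd
        linarith
      · rw [c2] at f3
        linarith
  have hJℓpos : 0 < (J:ℤ) * ℓ := by
    have h1 : (1:ℤ) ≤ (J:ℤ) := by exact_mod_cast (by omega : 1 ≤ J)
    have h2 : (1:ℤ) ≤ (ℓ:ℤ) := by exact_mod_cast hl
    nlinarith
  have formula2 : (∀ j : ℤ, j.natAbs ≤ J → u j = u 0 + j * ℓ) ∨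
      (∀ j : ℤ, j.natAbs ≤ J → u j = u 0 - j * ℓ) := by
    by_cases hd : u (J:ℤ) = u 0 + (J:ℤ) * ℓ
    · left
      intro j hj
      rcases formula j hj with ⟨f, _⟩ | ⟨f, fJ⟩
      · exact f
      · exfalso
        rw [hd] at fJ
        linarith
    · right
      intro j hj
      rcases formula j hj with ⟨f, fJ⟩ | ⟨f, _⟩
      · exact absurd fJ hd
      · exact f
  have natAbs_mul_eq : ∀ s : ℤ, (s * ℓ).natAbs = s.natAbs * ℓ := by
    intro s
    rw [Int.natAbs_mul]
    simp
  rcases formula2 with hmono | hmono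
  · -- increasing
    obtain ⟨s, hs1, hs2, hs3⟩ := pick (ℓ : ℤ) lo (u 0) (by exact_mod_cast hl)
    have hsb : s.natAbs ≤ X + ℓ + 1 := by
      have h1 : s.natAbs * ℓ ≤ X + ℓ := by
        rw [← natAbs_mul_eq]
        calc (s * (ℓ:ℤ)).natAbs ≤ (lo - u 0).natAbs + ((ℓ:ℤ)).natAbs := hs3
        _ ≤ X + ℓ := by omega
      have h2 : s.natAbs ≤ s.natAbs * ℓ := Nat.le_mul_of_pos_right _ (by omega)
      omega
    have hjb : s.natAbs ≤ J := by omega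
    have hjb2 : (s + 2*K).natAbs ≤ J := by omega
    refine ⟨s, hjb, hjb2, ?_, ?_, ?_, ?_⟩
    all_goals
      rw [hmono _ (by omega)]
    · linarith
    · linarith
    · have e : (s + 2*(K:ℤ)) * (ℓ:ℤ) = s * ℓ + 2 * K * ℓ := by ring
      have h2 : (0:ℤ) ≤ 2 * (K:ℤ) * ℓ := by positivity
      linarith
    · have e : (s + 2*(K:ℤ)) * (ℓ:ℤ) = s * ℓ + 2 * K * ℓ := by ring
      linarith
  · -- decreasing
    obtain ⟨s, hs1, hs2, hs3⟩ := pick (ℓ : ℤ) (lo + 2 * K * ℓ) (u 0) (by exact_mod_cast hl)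
    have hsb : s.natAbs ≤ X + 2 * K * ℓ + ℓ + 1 := by
      have h1 : s.natAbs * ℓ ≤ X + 2 * K * ℓ + ℓ := by
        rw [← natAbs_mul_eq]
        calc (s * (ℓ:ℤ)).natAbs ≤ (lo + 2 * K * ℓ - u 0).natAbs + ((ℓ:ℤ)).natAbs := hs3
        _ ≤ X + 2 * K * ℓ + ℓ := by omega
      have h2 : s.natAbs ≤ s.natAbs * ℓ := Nat.le_mul_of_pos_right _ (by omega)
      omega
    have hjb : (-s).natAbs ≤ J := by omega
    have hjb2 : (-s + 2*K).natAbs ≤ J := by omega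
    refine ⟨-s, hjb, hjb2, ?_, ?_, ?_, ?_⟩
    all_goals
      rw [hmono _ (by omega)]
    · have e : -(-s * (ℓ:ℤ)) = s * ℓ := by ring
      have h2 : (0:ℤ) ≤ 2 * (K:ℤ) * ℓ := by positivity
      linarith
    · have e : -(-s * (ℓ:ℤ)) = s * ℓ := by ring
      linarith
    · have e : -((-s + 2*(K:ℤ)) * (ℓ:ℤ)) = s * ℓ - 2 * K * ℓ := by ring
      linarith
    · have e : -((-s + 2*(K:ℤ)) * (ℓ:ℤ)) = s * ℓ - 2 * K * ℓ := by ring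
      have h2 : (0:ℤ) ≤ 2 * (K:ℤ) * ℓ := by positivity
      linarith

end Arith

section Main

variable {G : Type*} [Group G] [MulAction G V]

omit hT in
lemma pst_antitone {S S' : Set V} (hss : S ⊆ S') :
    pstSet (G := G) S' ⊆ pstSet S := fun g hg s hs => hg s (hss hs)

end Main

end St11

/-- if the pointwise stabilizer of the axis `L` of a hyperbolic element `h`
equals the pointwise stabilizer of a finite subsegment `[x,y]` of `L`, then there is `M > 0`
such that any subsegment of `L` of length at least `M` has the same pointwise stabilizer. -/
theorem stmt_11 {V G : Type*} [Group G] [MulAction G V] (T : SimpleGraph V)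
    (hT : T.IsTree)
    (haut : ∀ (g : G) (a b : V), T.Adj (g • a) (g • b) ↔ T.Adj a b)
    (h : G)
    (hhyp : ¬ ((∃ w : V, h • w = w) ∨ ∃ a b : V, T.Adj a b ∧ h • a = b ∧ h • b = a))
    (hxy : ∃ x ∈ axisSet T h, ∃ y ∈ axisSet T h,
      pstSet (G := G) (axisSet T h) = pstSet (seg T x y)) :
    ∃ M : ℕ, 0 < M ∧ ∀ z ∈ axisSet T h, ∀ w ∈ axisSet T h,
      M ≤ T.dist z w → pstSet (G := G) (seg T z w) = pstSet (axisSet T h) := by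
  classical
  open St11 in
  push_neg at hhyp
  obtain ⟨hfix', hinv'⟩ := hhyp
  obtain ⟨x, hx, y, hy, hpst⟩ := hxy
  set ℓ := sInf (Set.range fun u : V => T.dist u (h • u)) with hldef
  have axis_iff : ∀ p : V, p ∈ axisSet T h ↔ T.dist p (h • p) = ℓ := by
    intro p
    rw [hldef]
    exact Iff.rfl
  have hmin : ∀ u : V, ℓ ≤ T.dist u (h • u) := fun u => Nat.sInf_le ⟨u, rfl⟩
  have hx' : T.dist x (h • x) = ℓ := (axis_iff x).1 hx
  have hy' : T.dist y (h • y) = ℓ := (axis_iff y).1 hy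
  have hl1 : 1 ≤ ℓ := St11.ell_pos hfix' hx' hT.isConnected
  -- cancellation helpers
  have ecan : ∀ (j : ℤ) (q : V), (h ^ (-j) : G) • (h ^ j • q) = q := by
    intro j q
    rw [smul_smul, ← zpow_add]
    simp
  have ecan' : ∀ (j : ℤ) (q : V), (h ^ j : G) • (h ^ (-j) • q) = q := by
    intro j q
    rw [smul_smul, ← zpow_add]
    simp
  -- lines through axis points are inside the axis
  have line_sub_axis : ∀ (u0 : V), T.dist u0 (h • u0) = ℓ → ∀ (Nn : ℕ),
      ∀ p ∈ seg T (h ^ (-(Nn:ℤ)) • u0) (h ^ ((Nn:ℤ)) • u0), p ∈ axisSet T h := by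
    intro u0 hu0 Nn p hp
    rw [axis_iff]
    have ha : T.dist (h ^ (-(Nn:ℤ)) • u0) (h • (h ^ (-(Nn:ℤ)) • u0)) = ℓ :=
      St11.axis_smul_zpow hT haut hu0 _
    have e2 : (h ^ (2*Nn) : G) • (h ^ (-(Nn:ℤ)) • u0) = h ^ ((Nn:ℤ)) • u0 := by
      rw [smul_smul]
      have e3 : (h ^ (2*Nn) : G) * h ^ (-(Nn:ℤ)) = h ^ ((Nn:ℤ)) := by
        rw [← zpow_natCast h (2*Nn), ← zpow_add]
        congr 1
        push_cast
        ring
      rw [e3]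
    exact St11.seg_line_axis hT haut hfix' hinv' hmin ha (2*Nn) (by rw [e2]; exact hp)
  set K := T.dist x y + 2 with hKdef
  set x0 := (h ^ (-(K:ℤ)) : G) • x with hx0def
  set x1 := (h ^ ((K:ℤ)) : G) • x with hx1def
  have hyline : y ∈ seg T x0 x1 :=
    St11.axis_in_line hT haut hfix' hinv' hmin hx' hy' (by omega)
  have hxline : x ∈ seg T x0 x1 := by
    have h0 := St11.mem_line hT haut hfix' hinv' hmin hx' K 0 (by simp)
    rwa [zpow_zero, one_smul] at h0
  have hseg01_axis : ∀ p ∈ seg T x0 x1, p ∈ axisSet T h := fun p hp =>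
    line_sub_axis x hx' K p hp
  have hpst0 : pstSet (G := G) (axisSet T h) = pstSet (seg T x0 x1) := by
    apply Set.Subset.antisymm
    · exact St11.pst_antitone (fun p hp => hseg01_axis p hp)
    · intro g hg
      rw [hpst]
      exact St11.pst_antitone (St11.seg_sub_seg hT hxline hyline) hg
  have axis_inv : ∀ (j : ℤ) (v : V), v ∈ axisSet T h → h ^ j • v ∈ axisSet T h := by
    intro j v hv
    rw [axis_iff] at hv ⊢
    exact St11.axis_smul_zpow hT haut hv j
  have hpstj : ∀ j : ℤ,
      pstSet (G := G) (seg T (h ^ j • x0) (h ^ j • x1)) = pstSet (axisSet T h) := by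
    intro j
    apply Set.Subset.antisymm
    · intro g hg v hv
      have hconj : (h ^ (-j) * g * h ^ j : G) ∈ pstSet (G := G) (seg T x0 x1) := by
        intro s hs
        have hs' : h ^ j • s ∈ seg T (h ^ j • x0) (h ^ j • x1) :=
          St11.smul_seg hT haut _ hs
        have hfixs := hg _ hs'
        rw [mul_smul, mul_smul, hfixs]
        exact ecan j s
      have hconj2 : (h ^ (-j) * g * h ^ j : G) ∈ pstSet (G := G) (axisSet T h) := by
        rw [hpst0]
        exact hconj
      have hvj : h ^ (-j) • v ∈ axisSet T h := axis_inv (-j) v hv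
      have hfixv := hconj2 _ hvj
      rw [mul_smul, mul_smul, ecan' j v] at hfixv
      exact smul_left_cancel _ hfixv
    · apply St11.pst_antitone
      intro p hp
      have hp' : (h ^ (-j) : G) • p ∈ seg T x0 x1 := by
        have hmap := St11.smul_seg hT haut (h ^ (-j) : G) hp
        rwa [ecan j x0, ecan j x1] at hmap
      have hax := hseg01_axis _ hp'
      rw [← ecan' j p]
      exact axis_inv j _ hax
  refine ⟨2*K*ℓ + ℓ + 1, by omega, ?_⟩
  intro z hz w hw hdzw
  have hz' : T.dist z (h • z) = ℓ := (axis_iff z).1 hz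
  have hw' : T.dist w (h • w) = ℓ := (axis_iff w).1 hw
  set X := T.dist z x + T.dist z w with hXdef
  set J := X + 2*K*ℓ + 2*ℓ + 2*K + 5 with hJdef
  set N := T.dist z x + J*ℓ + T.dist z w + 5 with hNdef
  set a := (h ^ (-(N:ℤ)) : G) • z with hadef
  set b := (h ^ ((N:ℤ)) : G) • z with hbdef
  have hzab : z ∈ seg T a b := by
    have h0 := St11.mem_line hT haut hfix' hinv' hmin hz' N 0 (by simp)
    rwa [zpow_zero, one_smul] at h0
  have hwab : w ∈ seg T a b :=
    St11.axis_in_line hT haut hfix' hinv' hmin hz' hw' (by omega)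
  have hJl : J ≤ J * ℓ := Nat.le_mul_of_pos_right _ (by omega)
  have chain : ∀ j : ℤ, j.natAbs ≤ J → h ^ j • x ∈ seg T a b := by
    intro j hj
    have haxj : T.dist (h ^ j • x) (h • (h ^ j • x)) = ℓ := St11.axis_smul_zpow hT haut hx' j
    apply St11.axis_in_line hT haut hfix' hinv' hmin hz' haxj
    have t1 : T.dist z (h ^ j • x) ≤ T.dist z x + T.dist x (h ^ j • x) :=
      hT.isConnected.dist_triangle
    have t2 : T.dist x (h ^ j • x) = j.natAbs * ℓ := by
      have hzd := St11.zpow_dist hT haut hfix' hinv' hmin hx' 0 j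
      rw [zpow_zero, one_smul] at hzd
      rw [hzd]
      congr 1
      omega
    have t3 : j.natAbs * ℓ ≤ J * ℓ := Nat.mul_le_mul_right _ hj
    omega
  have hxab' : x ∈ seg T a b := by
    have h0 := chain 0 (by simp)
    rwa [zpow_zero, one_smul] at h0
  have hdiff : ∀ i j : ℤ, i.natAbs ≤ J → j.natAbs ≤ J →
      ((T.dist a (h ^ i • x) : ℤ) - T.dist a (h ^ j • x)).natAbs = (i - j).natAbs * ℓ := by
    intro i j hi hj
    have hld := St11.line_dist hT (chain i hi) (chain j hj)
    have hzd := St11.zpow_dist hT haut hfix' hinv' hmin hx' i j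
    omega
  obtain ⟨lo, hi, hcrit, hgap', hXlo', hXhi'⟩ : ∃ lo hi : ℤ,
      (∀ q, q ∈ seg T a b → lo ≤ (T.dist a q : ℤ) → (T.dist a q : ℤ) ≤ hi → q ∈ seg T z w) ∧
      (lo + 2*K*ℓ + ℓ ≤ hi) ∧ ((lo - (T.dist a x : ℤ)).natAbs ≤ X) ∧
      ((hi - (T.dist a x : ℤ)).natAbs ≤ X) := by
    have hdzw' : T.dist z w = ((T.dist a z : ℤ) - T.dist a w).natAbs :=
      St11.line_dist hT hzab hwab
    have hdzwZ : 2*(K:ℤ)*ℓ + ℓ + 1 ≤ (T.dist z w : ℤ) := by exact_mod_cast hdzw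
    have dzx : T.dist z x = ((T.dist a z : ℤ) - T.dist a x).natAbs :=
      St11.line_dist hT hzab hxab'
    have dwx : T.dist w x = ((T.dist a w : ℤ) - T.dist a x).natAbs :=
      St11.line_dist hT hwab hxab'
    have dtri : T.dist w x ≤ T.dist w z + T.dist z x := hT.isConnected.dist_triangle
    have dcom : T.dist w z = T.dist z w := SimpleGraph.dist_comm
    rcases le_total (T.dist a z) (T.dist a w) with hor | hor
    · refine ⟨T.dist a z, T.dist a w, ?_, by omega, by omega, by omega⟩
      intro q hq h1 h2
      exact St11.line_between hT hzab hwab hq (by omega) (by omega)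
    · refine ⟨T.dist a w, T.dist a z, ?_, by omega, by omega, by omega⟩
      intro q hq h1 h2
      rw [St11.seg_comm]
      exact St11.line_between hT hwab hzab hq (by omega) (by omega)
  have e0 : (h ^ (0:ℤ) : G) • x = x := by rw [zpow_zero, one_smul]
  have hXlo2 : (lo - ((T.dist a ((h:G) ^ (0:ℤ) • x) : ℕ) : ℤ)).natAbs ≤ X := by
    rw [e0]; exact hXlo'
  have hXhi2 : (hi - ((T.dist a ((h:G) ^ (0:ℤ) • x) : ℕ) : ℤ)).natAbs ≤ X := by
    rw [e0]; exact hXhi'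
  obtain ⟨j, hj1, hj2, hv1, hv2, hv3, hv4⟩ :=
    St11.arith_select ℓ K J X (fun j : ℤ => (T.dist a (h ^ j • x) : ℤ)) lo hi hl1
      hdiff hXlo2 hXhi2 (by omega) hgap'
  have hq1zw : h ^ j • x ∈ seg T z w := hcrit _ (chain j hj1) hv1 hv2
  have hq2zw : h ^ (j + 2*(K:ℤ)) • x ∈ seg T z w := hcrit _ (chain _ hj2) hv3 hv4
  have hsub2 : seg T (h ^ j • x) (h ^ (j + 2*(K:ℤ)) • x) ⊆ seg T z w :=
    St11.seg_sub_seg hT hq1zw hq2zw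
  have e1 : (h ^ (j + (K:ℤ)) : G) • x0 = h ^ j • x := by
    rw [hx0def, smul_smul, ← zpow_add]
    congr 1
    ring
  have e2 : (h ^ (j + (K:ℤ)) : G) • x1 = h ^ (j + 2*(K:ℤ)) • x := by
    rw [hx1def, smul_smul, ← zpow_add]
    congr 1
    ring
  apply Set.Subset.antisymm
  · intro g hg
    have hpj := hpstj (j + (K:ℤ))
    rw [e1, e2] at hpj
    rw [← hpj]
    exact St11.pst_antitone hsub2 hg
  · apply St11.pst_antitone
    intro p hp
    exact line_sub_axis z hz' N p (St11.seg_sub_seg hT hzab hwab hp)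
end

section
/- Let G = Γ𝒢 be the graph product of a family of nontrivial groups over a finite simple graph Γ with vertex set V. Let P = g₁G_Sg₁⁻¹ and Q = g₂G_Tg₂⁻¹ be parabolic subgroups of G (S, T ⊆ V, g₁, g₂ ∈ G). Then: (a) if P ⊆ Q then |S| ≤ |T|, and if moreover |S| = |T| then P = Q; (b) if P ∩ Q = g₃G_Rg₃⁻¹ for some R ⊆ V and g₃ ∈ G, and |S| ≤ |R|, then P ⊆ Q. -/
set_option linter.unusedSectionVars false


variable {V : Type*} [Fintype V] (Γ : SimpleGraph V) (Gv : V → Type*) [∀ v, Group (Gv v)]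

open scoped commutatorElement

/-- The commutation relators defining the graph product. -/
def graphProdRels : Set (Monoid.CoprodI Gv) :=
  {x | ∃ (u v : V) (g : Gv u) (h : Gv v), Γ.Adj u v ∧
        x = ⁅Monoid.CoprodI.of g, Monoid.CoprodI.of h⁆}

/-- The graph product of the family `Gv` over the graph `Γ`: the quotient of the free
product by the normal closure of the commutation relators. -/
def GraphProduct : Type _ :=
  Monoid.CoprodI Gv ⧸ Subgroup.normalClosure (graphProdRels Γ Gv)

instance : Group (GraphProduct Γ Gv) :=
  inferInstanceAs (Group (Monoid.CoprodI Gv ⧸ Subgroup.normalClosure (graphProdRels Γ Gv)))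

/-- The canonical homomorphism from a vertex group to the graph product. -/
def GraphProduct.of (v : V) : Gv v →* GraphProduct Γ Gv :=
  (QuotientGroup.mk' (Subgroup.normalClosure (graphProdRels Γ Gv))).comp Monoid.CoprodI.of

/-- The full subgroup generated by the vertex groups with vertices in `A`. -/
def fullSubgroup (A : Set V) : Subgroup (GraphProduct Γ Gv) :=
  Subgroup.closure (⋃ v ∈ A, Set.range (GraphProduct.of Γ Gv v))

/-- The conjugate `g H g⁻¹` of a subgroup. -/
def conjSubgroup {G : Type*} [Group G] (g : G) (H : Subgroup G) : Subgroup G :=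
  Subgroup.map (MulAut.conj g).toMonoidHom H

/-- Parabolic subgroups of the graph product: conjugates of full subgroups. -/
def IsParabolic (P : Subgroup (GraphProduct Γ Gv)) : Prop :=
  ∃ (A : Set V) (g : GraphProduct Γ Gv), P = conjSubgroup g (fullSubgroup Γ Gv A)

/-- The link of a set of vertices: vertices adjacent to every vertex of `A`. -/
def linkSet (A : Set V) : Set V := {u : V | ∀ a ∈ A, Γ.Adj u a}


theorem GP_mem_conj {G : Type*} [Group G] (g : G) (H : Subgroup G) (y : G) :
    y ∈ conjSubgroup g H ↔ g⁻¹ * y * g ∈ H := by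
  simp only [conjSubgroup, Subgroup.mem_map, MulEquiv.coe_toMonoidHom, MulAut.conj_apply]
  constructor
  · rintro ⟨x, hx, rfl⟩
    have e : g⁻¹ * (g * x * g⁻¹) * g = x := by group
    rwa [e]
  · intro h
    exact ⟨g⁻¹ * y * g, h, by group⟩

theorem GP_conj_le_conj_iff {G : Type*} [Group G] (H K : Subgroup G) (a b : G) :
    conjSubgroup a H ≤ conjSubgroup b K ↔
      ∀ x ∈ H, (b⁻¹ * a) * x * (b⁻¹ * a)⁻¹ ∈ K := by
  constructor
  · intro hle x hx
    have h1 : a * x * a⁻¹ ∈ conjSubgroup a H := by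
      rw [GP_mem_conj]
      have e : a⁻¹ * (a * x * a⁻¹) * a = x := by group
      rwa [e]
    have h2 := hle h1
    rw [GP_mem_conj] at h2
    have e : b⁻¹ * (a * x * a⁻¹) * b = (b⁻¹ * a) * x * (b⁻¹ * a)⁻¹ := by group
    rwa [e] at h2
  · intro h y hy
    rw [GP_mem_conj] at hy ⊢
    have h2 := h _ hy
    have e : (b⁻¹ * a) * (a⁻¹ * y * a) * (b⁻¹ * a)⁻¹ = b⁻¹ * y * b := by group
    rwa [e] at h2

theorem GP_conj_eq_conj {G : Type*} [Group G] {H : Subgroup G} {a b : G}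
    (h : conjSubgroup (b⁻¹ * a) H = H) : conjSubgroup a H = conjSubgroup b H := by
  have key : ∀ y : G, (a⁻¹ * y * a ∈ H ↔ b⁻¹ * y * b ∈ H) := by
    intro y
    have h1 : (b⁻¹ * y * b) ∈ conjSubgroup (b⁻¹ * a) H ↔ (b⁻¹ * y * b) ∈ H := by rw [h]
    rw [GP_mem_conj] at h1
    have e : (b⁻¹ * a)⁻¹ * (b⁻¹ * y * b) * (b⁻¹ * a) = a⁻¹ * y * a := by group
    rwa [e] at h1
  ext y
  rw [GP_mem_conj, GP_mem_conj]
  exact key y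

/-- Commutation of adjacent vertex-group images in the graph product. -/
theorem GP_of_commute {u v : V} (h : Γ.Adj u v) (x : Gv u) (y : Gv v) :
    Commute (GraphProduct.of Γ Gv u x) (GraphProduct.of Γ Gv v y) := by
  rw [← commutatorElement_eq_one_iff_commute]
  have hrel : ⁅Monoid.CoprodI.of x, Monoid.CoprodI.of y⁆ ∈
      Subgroup.normalClosure (graphProdRels Γ Gv) :=
    Subgroup.subset_normalClosure ⟨u, v, x, y, h, rfl⟩
  have h1 : (QuotientGroup.mk' (Subgroup.normalClosure (graphProdRels Γ Gv)))
      ⁅Monoid.CoprodI.of x, Monoid.CoprodI.of y⁆ = 1 :=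
    (QuotientGroup.eq_one_iff _).2 hrel
  rw [map_commutatorElement] at h1
  exact h1

/-- Universal property: lift a family of homomorphisms commuting along edges. -/
def GP_lift {H : Type*} [Group H] (fi : ∀ v, Gv v →* H)
    (hcomm : ∀ u v, Γ.Adj u v → ∀ (x : Gv u) (y : Gv v), Commute (fi u x) (fi v y)) :
    GraphProduct Γ Gv →* H :=
  QuotientGroup.lift _ (Monoid.CoprodI.lift fi)
    (Subgroup.normalClosure_le_normal (by
      rintro r ⟨u, v, x, y, hadj, rfl⟩
      simp only [SetLike.mem_coe, MonoidHom.mem_ker, map_commutatorElement,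
        Monoid.CoprodI.lift_of]
      exact commutatorElement_eq_one_iff_commute.2 (hcomm u v hadj x y)))

theorem GP_lift_of {H : Type*} [Group H] (fi : ∀ v, Gv v →* H)
    (hcomm : ∀ u v, Γ.Adj u v → ∀ (x : Gv u) (y : Gv v), Commute (fi u x) (fi v y))
    (v : V) (x : Gv v) :
    GP_lift Γ Gv fi hcomm (GraphProduct.of Γ Gv v x) = fi v x := by
  show QuotientGroup.lift _ (Monoid.CoprodI.lift fi) _
      ((QuotientGroup.mk' _) (Monoid.CoprodI.of x)) = fi v x
  rw [QuotientGroup.mk'_apply, QuotientGroup.lift_mk', Monoid.CoprodI.lift_of]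

/-- Induction principle for graph products. -/
theorem GP_induction {C : GraphProduct Γ Gv → Prop} (x : GraphProduct Γ Gv)
    (h1 : C 1) (hof : ∀ (v : V) (g : Gv v), C (GraphProduct.of Γ Gv v g))
    (hmul : ∀ x y, C x → C y → C (x * y)) : C x := by
  obtain ⟨y, rfl⟩ := QuotientGroup.mk'_surjective
    (Subgroup.normalClosure (graphProdRels Γ Gv)) x
  induction y using Monoid.CoprodI.induction_on with
  | one => rw [map_one]; exact h1
  | of i m => exact hof i m
  | mul a b ha hb => rw [map_mul]; exact hmul _ _ ha hb

theorem GP_of_mem_full {A : Set V} {v : V} (hv : v ∈ A) (x : Gv v) :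
    GraphProduct.of Γ Gv v x ∈ fullSubgroup Γ Gv A :=
  Subgroup.subset_closure (Set.mem_iUnion₂.2 ⟨v, hv, Set.mem_range_self x⟩)

open scoped Classical in
/-- The retraction onto the full subgroup supported on `A`. -/
noncomputable def GP_retr (A : Set V) : GraphProduct Γ Gv →* GraphProduct Γ Gv :=
  GP_lift Γ Gv (fun v => if v ∈ A then GraphProduct.of Γ Gv v else 1) (by
    intro u v hadj x y
    beta_reduce
    by_cases hu : u ∈ A <;> by_cases hv : v ∈ A <;>
      simp only [hu, hv, if_true, if_false, MonoidHom.one_apply] <;>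
      first
        | exact GP_of_commute Γ Gv hadj x y
        | exact Commute.one_right _
        | exact Commute.one_left _)

theorem GP_retr_of_mem (A : Set V) {v : V} (hv : v ∈ A) (x : Gv v) :
    GP_retr Γ Gv A (GraphProduct.of Γ Gv v x) = GraphProduct.of Γ Gv v x := by
  rw [GP_retr, GP_lift_of]
  rw [if_pos hv]

theorem GP_retr_of_not_mem (A : Set V) {v : V} (hv : v ∉ A) (x : Gv v) :
    GP_retr Γ Gv A (GraphProduct.of Γ Gv v x) = 1 := by
  rw [GP_retr, GP_lift_of]
  rw [if_neg hv, MonoidHom.one_apply]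

theorem GP_retr_mem (A : Set V) (x : GraphProduct Γ Gv) :
    GP_retr Γ Gv A x ∈ fullSubgroup Γ Gv A := by
  refine GP_induction Γ Gv (C := fun y => GP_retr Γ Gv A y ∈ fullSubgroup Γ Gv A) x
    ?_ ?_ ?_
  · show GP_retr Γ Gv A 1 ∈ fullSubgroup Γ Gv A
    rw [map_one]; exact one_mem _
  · intro v g
    show GP_retr Γ Gv A (GraphProduct.of Γ Gv v g) ∈ fullSubgroup Γ Gv A
    by_cases hv : v ∈ A
    · rw [GP_retr_of_mem Γ Gv A hv]
      exact GP_of_mem_full Γ Gv hv g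
    · rw [GP_retr_of_not_mem Γ Gv A hv]
      exact one_mem _
  · intro a b ha hb
    show GP_retr Γ Gv A (a * b) ∈ fullSubgroup Γ Gv A
    rw [map_mul]
    exact mul_mem ha hb

theorem GP_retr_fix (A : Set V) {x : GraphProduct Γ Gv}
    (hx : x ∈ fullSubgroup Γ Gv A) : GP_retr Γ Gv A x = x := by
  have heq : Set.EqOn (GP_retr Γ Gv A) (MonoidHom.id _)
      (⋃ v ∈ A, Set.range (GraphProduct.of Γ Gv v)) := by
    rintro y hy
    simp only [Set.mem_iUnion] at hy
    obtain ⟨v, hv, g, rfl⟩ := hy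
    simpa using GP_retr_of_mem Γ Gv A hv g
  exact MonoidHom.eqOn_closure heq hx

open scoped Classical in
/-- The retraction onto a single vertex group. -/
noncomputable def GP_toVertex (s : V) : GraphProduct Γ Gv →* Gv s :=
  GP_lift Γ Gv
    (fun v => if h : v = s then (by subst h; exact MonoidHom.id (Gv v)) else 1) (by
    intro u v hadj x y
    beta_reduce
    by_cases hu : u = s
    · have hv : ¬ v = s := fun hv => hadj.ne (hu.trans hv.symm)
      rw [dif_neg hv, MonoidHom.one_apply]
      exact Commute.one_right _
    · rw [dif_neg hu, MonoidHom.one_apply]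
      exact Commute.one_left _)

theorem GP_toVertex_of (s : V) (x : Gv s) :
    GP_toVertex Γ Gv s (GraphProduct.of Γ Gv s x) = x := by
  rw [GP_toVertex, GP_lift_of]
  rw [dif_pos rfl]
  rfl

theorem GP_subset_of_forall_conj [∀ v, Nontrivial (Gv v)] (S T : Set V)
    (g : GraphProduct Γ Gv)
    (h : ∀ x ∈ fullSubgroup Γ Gv S, g * x * g⁻¹ ∈ fullSubgroup Γ Gv T) : S ⊆ T := by
  intro s hs
  by_contra hsT
  obtain ⟨x, hx⟩ := exists_ne (1 : Gv s)
  have ha : GraphProduct.of Γ Gv s x ∈ fullSubgroup Γ Gv S := GP_of_mem_full Γ Gv hs x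
  have hb := h _ ha
  have h1 : GP_retr Γ Gv T (g * GraphProduct.of Γ Gv s x * g⁻¹)
      = g * GraphProduct.of Γ Gv s x * g⁻¹ := GP_retr_fix Γ Gv T hb
  rw [map_mul, map_mul, map_inv, GP_retr_of_not_mem Γ Gv T hsT] at h1
  have h2 : g * GraphProduct.of Γ Gv s x * g⁻¹ = 1 := by
    rw [← h1]; group
  have h3 : GraphProduct.of Γ Gv s x = 1 := by
    have e : GraphProduct.of Γ Gv s x = g⁻¹ * (g * GraphProduct.of Γ Gv s x * g⁻¹) * g := by
      group
    rw [e, h2]; group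
  have h4 : x = 1 := by
    have := congrArg (GP_toVertex Γ Gv s) h3
    rwa [GP_toVertex_of, map_one] at this
  exact hx h4

theorem GP_conj_full_eq_self (T : Set V) (g : GraphProduct Γ Gv)
    (h : ∀ x ∈ fullSubgroup Γ Gv T, g * x * g⁻¹ ∈ fullSubgroup Γ Gv T) :
    conjSubgroup g (fullSubgroup Γ Gv T) = fullSubgroup Γ Gv T := by
  set F := fullSubgroup Γ Gv T with hF
  set π := GP_retr Γ Gv T with hπ
  have ht : π g ∈ F := GP_retr_mem Γ Gv T g
  set t := π g with htdef
  set n := g * t⁻¹ with hn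
  have hπt : π t = t := GP_retr_fix Γ Gv T ht
  have hπn : π n = 1 := by rw [hn, map_mul, map_inv, hπt]; exact mul_inv_cancel t
  have hkey : ∀ x ∈ F, n * x * n⁻¹ = x := by
    intro x hx
    have h1 : n * x * n⁻¹ ∈ F := by
      have e : n * x * n⁻¹ = g * (t⁻¹ * x * t) * g⁻¹ := by rw [hn]; group
      rw [e]
      exact h _ (mul_mem (mul_mem (inv_mem ht) hx) ht)
    have h2 : π (n * x * n⁻¹) = x := by
      rw [map_mul, map_mul, map_inv, hπn, GP_retr_fix Γ Gv T hx]; group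
    rw [GP_retr_fix Γ Gv T h1] at h2
    exact h2
  have hconj : ∀ x ∈ F, g * x * g⁻¹ = t * x * t⁻¹ := by
    intro x hx
    have h3 : t * x * t⁻¹ ∈ F := mul_mem (mul_mem ht hx) (inv_mem ht)
    have h4 := hkey _ h3
    calc g * x * g⁻¹ = n * (t * x * t⁻¹) * n⁻¹ := by rw [hn]; group
      _ = t * x * t⁻¹ := h4
  ext y
  rw [GP_mem_conj]
  constructor
  · intro hy
    have h5 := hconj _ hy
    have hy' : t * (g⁻¹ * y * g) * t⁻¹ ∈ F := mul_mem (mul_mem ht hy) (inv_mem ht)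
    rw [← h5] at hy'
    have e : g * (g⁻¹ * y * g) * g⁻¹ = y := by group
    rwa [e] at hy'
  · intro hy
    have hx' : t⁻¹ * y * t ∈ F := mul_mem (mul_mem (inv_mem ht) hy) ht
    have h4 := hconj _ hx'
    have e : t * (t⁻¹ * y * t) * t⁻¹ = y := by group
    rw [e] at h4
    have e2 : g⁻¹ * y * g = t⁻¹ * y * t := by
      conv_lhs => rw [← h4]
      group
    rw [e2]
    exact hx'



/-- comparison of parabolic subgroups via the sizes of their supports. -/
theorem stmt_12 [∀ v, Nontrivial (Gv v)]
    (S T : Finset V) (g₁ g₂ : GraphProduct Γ Gv)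
    (P Q : Subgroup (GraphProduct Γ Gv))
    (hP : P = conjSubgroup g₁ (fullSubgroup Γ Gv (S : Set V)))
    (hQ : Q = conjSubgroup g₂ (fullSubgroup Γ Gv (T : Set V))) :
    (P ≤ Q → S.card ≤ T.card ∧ (S.card = T.card → P = Q)) ∧
    (∀ (R : Finset V) (g₃ : GraphProduct Γ Gv),
      P ⊓ Q = conjSubgroup g₃ (fullSubgroup Γ Gv (R : Set V)) →
      S.card ≤ R.card → P ≤ Q) := by
  subst hP hQ
  constructor
  · intro hPQ
    have hmain : ∀ x ∈ fullSubgroup Γ Gv (S : Set V),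
        (g₂⁻¹ * g₁) * x * (g₂⁻¹ * g₁)⁻¹ ∈ fullSubgroup Γ Gv (T : Set V) :=
      (GP_conj_le_conj_iff _ _ g₁ g₂).1 hPQ
    have hsub : (S : Set V) ⊆ (T : Set V) :=
      GP_subset_of_forall_conj Γ Gv _ _ _ hmain
    have hsub' : S ⊆ T := Finset.coe_subset.1 hsub
    refine ⟨Finset.card_le_card hsub', fun hcard => ?_⟩
    have hST : S = T := Finset.eq_of_subset_of_card_le hsub' (le_of_eq hcard.symm)
    subst hST
    exact GP_conj_eq_conj (GP_conj_full_eq_self Γ Gv _ _ hmain)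
  · intro R g₃ hR hcard
    have hle : conjSubgroup g₃ (fullSubgroup Γ Gv (R : Set V)) ≤
        conjSubgroup g₁ (fullSubgroup Γ Gv (S : Set V)) := by
      rw [← hR]; exact inf_le_left
    have hmain : ∀ x ∈ fullSubgroup Γ Gv (R : Set V),
        (g₁⁻¹ * g₃) * x * (g₁⁻¹ * g₃)⁻¹ ∈ fullSubgroup Γ Gv (S : Set V) :=
      (GP_conj_le_conj_iff _ _ g₃ g₁).1 hle
    have hsub : (R : Set V) ⊆ (S : Set V) :=
      GP_subset_of_forall_conj Γ Gv _ _ _ hmain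
    have hsub' : R ⊆ S := Finset.coe_subset.1 hsub
    have hRS : R = S := Finset.eq_of_subset_of_card_le hsub' hcard
    subst hRS
    have heq : conjSubgroup g₃ (fullSubgroup Γ Gv (R : Set V)) =
        conjSubgroup g₁ (fullSubgroup Γ Gv (R : Set V)) :=
      GP_conj_eq_conj (GP_conj_full_eq_self Γ Gv _ _ hmain)
    rw [heq] at hR
    exact inf_eq_left.1 hR
end
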